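/- arXiv:2603.02824 — 4 statements merged into one kernel-verified Lean document; each statement's English description precedes it below -/
import Mathlib

section
/- Let G be a graph and e_1,...,e_q pairwise disjoint edges of G. Suppose e_i = {x,y} for some i, where the only neighbor of x in G is y. Then the even-connection graph G^{e_1···e_q} equals the even-connection graph of G \ {x,y} with respect to the remaining edges e_1,...,e_{i-1},e_{i+1},...,e_q. -/
variable {V : Type*}

/-- `M` is a set of pairwise disjoint edges of `G` with all endpoints in `F`. -/
def IsMatchingOn (G : SimpleGraph V) (F : Finset V) (M : Finset (Sym2 V)) : Prop :=
  (∀ e ∈ M, e ∈ G.edgeSet) ∧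
  (∀ e ∈ M, ∀ v ∈ e, v ∈ F) ∧
  (∀ e ∈ M, ∀ e' ∈ M, e ≠ e' → ∀ v ∈ e, v ∉ e')

/-- `F` is a face of the `q`-matching-free complex `MF^q(G)`. -/
def MFFace (G : SimpleGraph V) (q : ℕ) (F : Finset V) : Prop :=
  ¬ ∃ M : Finset (Sym2 V), IsMatchingOn G F M ∧ M.card = q

/-- `F` is a facet (maximal face) of the complex with face predicate `faces`. -/
def IsFacet (faces : Finset V → Prop) (F : Finset V) : Prop :=
  faces F ∧ ∀ F', faces F' → F ⊆ F' → F = F'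

/-- Even-connection of `u` and `v` with respect to the pairwise disjoint edges in `M`. -/
def EvenConnected (G : SimpleGraph V) (M : Finset (Sym2 V)) (u v : V) : Prop :=
  ∃ (r : ℕ) (p : ℕ → V), 1 ≤ r ∧ p 0 = u ∧ p (2 * r + 1) = v ∧
    (∀ k, k ≤ 2 * r → G.Adj (p k) (p (k + 1))) ∧
    (∀ k, k < r → s(p (2 * k + 1), p (2 * k + 2)) ∈ M) ∧
    (∀ k l, k < r → l < r →
      s(p (2 * k + 1), p (2 * k + 2)) = s(p (2 * l + 1), p (2 * l + 2)) → k = l)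

/-- The set of vertices covered by the edges in `M`. -/
def mSupp (M : Finset (Sym2 V)) : Set V := {v | ∃ e ∈ M, v ∈ e}

/-- The even-connection graph `G^{e₁⋯e_q}` (vertices covered by `M` are isolated). -/
def evenConnGraph (G : SimpleGraph V) (M : Finset (Sym2 V)) : SimpleGraph V where
  Adj x y := x ≠ y ∧ x ∉ mSupp M ∧ y ∉ mSupp M ∧
    (G.Adj x y ∨ EvenConnected G M x y ∨ EvenConnected G M y x)
  symm := by
    constructor
    rintro x y ⟨hne, hx, hy, h⟩
    refine ⟨hne.symm, hy, hx, ?_⟩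
    rcases h with h | h | h
    · exact Or.inl h.symm
    · exact Or.inr (Or.inr h)
    · exact Or.inr (Or.inl h)
  loopless := ⟨fun x h => h.1 rfl⟩

/-- Delete a set of vertices from a graph (keeping them as isolated vertices). -/
def delSet (G : SimpleGraph V) (S : Set V) : SimpleGraph V where
  Adj x y := G.Adj x y ∧ x ∉ S ∧ y ∉ S
  symm := ⟨fun x y ⟨h, hx, hy⟩ => ⟨h.symm, hy, hx⟩⟩
  loopless := ⟨fun x ⟨h, _, _⟩ => G.loopless.irrefl x h⟩

/-- The whisker graph `W(H)`: each vertex `x` (as `Sum.inl x`) gets a pendant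
whisker vertex `Sum.inr x`. -/
def whisker (H : SimpleGraph V) : SimpleGraph (V ⊕ V) where
  Adj x y :=
    (∃ a b, x = Sum.inl a ∧ y = Sum.inl b ∧ H.Adj a b) ∨
    (∃ a, (x = Sum.inl a ∧ y = Sum.inr a) ∨ (x = Sum.inr a ∧ y = Sum.inl a))
  symm := by
    constructor
    rintro x y (⟨a, b, hx, hy, hab⟩ | ⟨a, h | h⟩)
    · exact Or.inl ⟨b, a, hy, hx, hab.symm⟩
    · exact Or.inr ⟨a, Or.inr ⟨h.2, h.1⟩⟩
    · exact Or.inr ⟨a, Or.inl ⟨h.2, h.1⟩⟩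
  loopless := by
    constructor
    rintro x (⟨a, b, hx, hy, hab⟩ | ⟨a, ⟨h1, h2⟩ | ⟨h1, h2⟩⟩)
    · obtain rfl := Sum.inl_injective (hx ▸ hy : (Sum.inl a : V ⊕ V) = Sum.inl b)
      exact H.loopless.irrefl a hab
    · exact Sum.inl_ne_inr (h1 ▸ h2 : (Sum.inl a : V ⊕ V) = Sum.inr a)
    · exact Sum.inr_ne_inl (h1 ▸ h2 : (Sum.inr a : V ⊕ V) = Sum.inl a)

/-- Shellability of the complex with face predicate `faces`: there is a linear
order `F 0, F 1, …` of all facets such that each facet meets the union of the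
previous ones in a pure subcomplex of codimension one. -/
def Shellable (faces : Finset V → Prop) : Prop :=
  ∃ (t : ℕ) (F : Fin t → Finset V),
    (∀ i, IsFacet faces (F i)) ∧
    (∀ F', IsFacet faces F' → ∃ i, F' = F i) ∧
    Function.Injective F ∧
    ∀ k : Fin t, 0 < (k : ℕ) → ∀ σ : Finset V, σ ⊆ F k →
      (∃ i, i < k ∧ σ ⊆ F i) →
      ∃ τ : Finset V, σ ⊆ τ ∧ τ ⊆ F k ∧ (∃ i, i < k ∧ τ ⊆ F i) ∧
        τ.card = (F k).card - 1

/-- Vertex decomposability of the complex with face predicate `faces`. -/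
inductive VertexDecomposable [DecidableEq V] : (Finset V → Prop) → Prop
  | simplex (faces : Finset V → Prop) (F : Finset V)
      (h : ∀ F', faces F' ↔ F' ⊆ F) : VertexDecomposable faces
  | shed (faces : Finset V → Prop) (v : V)
      (hdel : VertexDecomposable (fun F => faces F ∧ v ∉ F))
      (hlink : VertexDecomposable (fun F => v ∉ F ∧ faces (insert v F)))
      (hshed : ∀ F, v ∉ F → faces (insert v F) →
        ¬ IsFacet (fun F' => faces F' ∧ v ∉ F') F) :
      VertexDecomposable faces


section Aux

variable {V : Type*}

private lemma ec_mono {G G' : SimpleGraph V} {M M' : Finset (Sym2 V)}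
    (hG : ∀ a b, G.Adj a b → G'.Adj a b) (hMM : M ⊆ M') {u v : V}
    (h : EvenConnected G M u v) : EvenConnected G' M' u v := by
  obtain ⟨r, p, hr, hp0, hpend, hadj, hmem, hinj⟩ := h
  exact ⟨r, p, hr, hp0, hpend, fun k hk => hG _ _ (hadj k hk),
    fun k hk => hMM (hmem k hk), hinj⟩

private lemma ec_forward [DecidableEq V] {G : SimpleGraph V} {M : Finset (Sym2 V)}
    (hdisj : ∀ e ∈ M, ∀ e' ∈ M, e ≠ e' → ∀ v ∈ e, v ∉ e')
    {x y : V} (he : s(x, y) ∈ M) (hleaf : ∀ z, G.Adj x z ↔ z = y)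
    {u v : V} (hu : u ∉ mSupp M) (hv : v ∉ mSupp M)
    (h : EvenConnected G M u v) :
    EvenConnected (delSet G {x, y}) (M.erase s(x, y)) u v := by
  obtain ⟨r, p, hr, hp0, hpend, hadj, hmem, hinj⟩ := h
  have hdisj' : ∀ e ∈ M, ∀ e' ∈ M, ∀ w, w ∈ e → w ∈ e' → e = e' := by
    intro e heM e' he'M w hw hw'
    by_contra hne
    exact hdisj e heM e' he'M hne w hw hw'
  have hxM : x ∈ mSupp M := ⟨s(x, y), he, by simp⟩
  have hyM : y ∈ mSupp M := ⟨s(x, y), he, by simp⟩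
  -- no step of the walk equals the edge {x,y}
  have hstep : ∀ k, k < r → s(p (2 * k + 1), p (2 * k + 2)) ≠ s(x, y) := by
    intro k hk heq
    have heq' := heq
    rw [Sym2.eq_iff] at heq
    rcases heq with ⟨h1, h2⟩ | ⟨h1, h2⟩
    · -- p(2k+1) = x, p(2k+2) = y
      have hadj0 : G.Adj (p (2 * k)) x := h1 ▸ hadj (2 * k) (by omega)
      have hy2k : p (2 * k) = y := (hleaf _).mp hadj0.symm
      rcases Nat.eq_zero_or_pos k with rfl | hk0
      · exact hu (hp0 ▸ (hy2k ▸ hyM : p (2 * 0) ∈ mSupp M))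
      · have hk1 : k - 1 < r := by omega
        have hy' : y ∈ s(p (2 * (k - 1) + 1), p (2 * (k - 1) + 2)) := by
          have : 2 * (k - 1) + 2 = 2 * k := by omega
          rw [this, hy2k]; simp
        have heqprev : s(p (2 * (k - 1) + 1), p (2 * (k - 1) + 2)) = s(x, y) :=
          hdisj' _ (hmem (k - 1) hk1) _ he y hy' (by simp)
        have := hinj (k - 1) k hk1 hk (heqprev.trans heq'.symm)
        omega
    · -- p(2k+1) = y, p(2k+2) = x
      have hadj0 : G.Adj x (p (2 * k + 3)) := h2 ▸ hadj (2 * k + 2) (by omega)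
      have hy3 : p (2 * k + 3) = y := (hleaf _).mp hadj0
      rcases Nat.lt_or_ge (k + 1) r with hk1 | hk1
      · have hy' : y ∈ s(p (2 * (k + 1) + 1), p (2 * (k + 1) + 2)) := by
          have : 2 * (k + 1) + 1 = 2 * k + 3 := by omega
          rw [this, hy3]; simp
        have heqnext : s(p (2 * (k + 1) + 1), p (2 * (k + 1) + 2)) = s(x, y) :=
          hdisj' _ (hmem (k + 1) hk1) _ he y hy' (by simp)
        have := hinj k (k + 1) hk hk1 (heq'.trans heqnext.symm)
        omega
      · have hkr : k + 1 = r := by omega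
        have : p (2 * r + 1) = y := by
          have h23 : 2 * r + 1 = 2 * k + 3 := by omega
          rw [h23]; exact hy3
        exact hv (hpend ▸ (this ▸ hyM : p (2 * r + 1) ∈ mSupp M))
  -- no vertex of the walk is x or y
  have hall : ∀ j, j ≤ 2 * r + 1 → p j ≠ x ∧ p j ≠ y := by
    intro j hj
    rcases Nat.eq_zero_or_pos j with rfl | hj0
    · rw [hp0]
      exact ⟨fun h => hu (h ▸ hxM), fun h => hu (h ▸ hyM)⟩
    rcases Nat.lt_or_ge j (2 * r + 1) with hjlt | hjge
    · obtain ⟨k, hk, hjk⟩ : ∃ k, k < r ∧ (j = 2 * k + 1 ∨ j = 2 * k + 2) := by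
        rcases Nat.even_or_odd j with ⟨m, hm⟩ | ⟨m, hm⟩
        · exact ⟨m - 1, by omega, Or.inr (by omega)⟩
        · exact ⟨m, by omega, Or.inl (by omega)⟩
      have hpjmem : p j ∈ s(p (2 * k + 1), p (2 * k + 2)) := by
        rcases hjk with rfl | rfl <;> simp
      constructor <;> intro hpj <;>
        exact hstep k hk
          (hdisj' _ (hmem k hk) _ he (p j) hpjmem (by rw [hpj]; simp))
    · have : j = 2 * r + 1 := by omega
      subst this
      rw [hpend]
      exact ⟨fun h => hv (h ▸ hxM), fun h => hv (h ▸ hyM)⟩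
  refine ⟨r, p, hr, hp0, hpend, ?_, ?_, hinj⟩
  · intro k hk
    change G.Adj (p k) (p (k + 1)) ∧ p k ∉ ({x, y} : Set V) ∧ p (k + 1) ∉ ({x, y} : Set V)
    refine ⟨hadj k hk, ?_, ?_⟩
    · rcases hall k (by omega) with ⟨h1, h2⟩
      simp [h1, h2]
    · rcases hall (k + 1) (by omega) with ⟨h1, h2⟩
      simp [h1, h2]
  · intro k hk
    exact Finset.mem_erase.mpr ⟨hstep k hk, hmem k hk⟩

end Aux

/-- if `e_i = {x,y}` is one of the pairwise disjoint edges and the only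
neighbor of `x` in `G` is `y`, then `G^{e₁⋯e_q}` equals the even-connection graph of
`G \ {x,y}` with respect to the remaining edges. -/
theorem evenConnGraph_leaf_remove
    {V : Type*} [DecidableEq V] (G : SimpleGraph V) (M : Finset (Sym2 V))
    [Fintype V] (hM : IsMatchingOn G Finset.univ M)
    (x y : V) (he : s(x, y) ∈ M) (hleaf : ∀ z, G.Adj x z ↔ z = y) :
    evenConnGraph G M = evenConnGraph (delSet G {x, y}) (M.erase s(x, y)) := by
  have hdisj := hM.2.2
  have hxM : x ∈ mSupp M := ⟨s(x, y), he, by simp⟩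
  have hyM : y ∈ mSupp M := ⟨s(x, y), he, by simp⟩
  -- vertices outside {x,y} not covered by M.erase are not covered by M
  have hsupp : ∀ w : V, w ≠ x → w ≠ y → w ∉ mSupp (M.erase s(x, y)) → w ∉ mSupp M := by
    rintro w hwx hwy hw ⟨f, hfM, hwf⟩
    by_cases hf : f = s(x, y)
    · subst hf
      rcases Sym2.mem_iff.mp hwf with rfl | rfl
      · exact hwx rfl
      · exact hwy rfl
    · exact hw ⟨f, Finset.mem_erase.mpr ⟨hf, hfM⟩, hwf⟩
  ext u v
  constructor
  · intro hh
    obtain ⟨hne, hu, hv, hadj⟩ : u ≠ v ∧ u ∉ mSupp M ∧ v ∉ mSupp M ∧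
      (G.Adj u v ∨ EvenConnected G M u v ∨ EvenConnected G M v u) := hh
    have hux : u ≠ x := fun h => hu (h ▸ hxM)
    have huy : u ≠ y := fun h => hu (h ▸ hyM)
    have hvx : v ≠ x := fun h => hv (h ▸ hxM)
    have hvy : v ≠ y := fun h => hv (h ▸ hyM)
    show u ≠ v ∧ u ∉ mSupp (M.erase s(x, y)) ∧ v ∉ mSupp (M.erase s(x, y)) ∧
      ((delSet G {x, y}).Adj u v ∨ EvenConnected (delSet G {x, y}) (M.erase s(x, y)) u v ∨
        EvenConnected (delSet G {x, y}) (M.erase s(x, y)) v u)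
    refine ⟨hne, ?_, ?_, ?_⟩
    · rintro ⟨f, hf, huf⟩
      exact hu ⟨f, Finset.erase_subset _ _ hf, huf⟩
    · rintro ⟨f, hf, hvf⟩
      exact hv ⟨f, Finset.erase_subset _ _ hf, hvf⟩
    rcases hadj with h | h | h
    · exact Or.inl (show G.Adj u v ∧ u ∉ ({x, y} : Set V) ∧ v ∉ ({x, y} : Set V) from
        ⟨h, by simp [hux, huy], by simp [hvx, hvy]⟩)
    · exact Or.inr (Or.inl (ec_forward hdisj he hleaf hu hv h))
    · exact Or.inr (Or.inr (ec_forward hdisj he hleaf hv hu h))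
  · intro hh
    obtain ⟨hne, hu, hv, hadj⟩ : u ≠ v ∧ u ∉ mSupp (M.erase s(x, y)) ∧ v ∉ mSupp (M.erase s(x, y)) ∧
      ((delSet G {x, y}).Adj u v ∨ EvenConnected (delSet G {x, y}) (M.erase s(x, y)) u v ∨
        EvenConnected (delSet G {x, y}) (M.erase s(x, y)) v u) := hh
    -- first: u and v are not x or y
    have hnotxy : (u ≠ x ∧ u ≠ y) ∧ (v ≠ x ∧ v ≠ y) := by
      rcases hadj with ⟨_, h1, h2⟩ | h | h
      · constructor
        · constructor <;> intro hh <;> subst hh <;> simp at h1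
        · constructor <;> intro hh <;> subst hh <;> simp at h2
      · obtain ⟨r, p, hr, hp0, hpend, hga, _, _⟩ := h
        have h1 := (hga 0 (by omega)).2.1
        have h2 := (hga (2 * r) (by omega)).2.2
        rw [hp0] at h1
        rw [show 2 * r + 1 = 2 * r + 1 from rfl, hpend] at h2
        constructor
        · constructor <;> intro hh <;> subst hh <;> simp at h1
        · constructor <;> intro hh <;> subst hh <;> simp at h2
      · obtain ⟨r, p, hr, hp0, hpend, hga, _, _⟩ := h
        have h1 := (hga 0 (by omega)).2.1
        have h2 := (hga (2 * r) (by omega)).2.2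
        rw [hp0] at h1
        rw [hpend] at h2
        constructor
        · constructor <;> intro hh <;> subst hh <;> simp at h2
        · constructor <;> intro hh <;> subst hh <;> simp at h1
    obtain ⟨⟨hux, huy⟩, hvx, hvy⟩ := hnotxy
    show u ≠ v ∧ u ∉ mSupp M ∧ v ∉ mSupp M ∧
      (G.Adj u v ∨ EvenConnected G M u v ∨ EvenConnected G M v u)
    refine ⟨hne, hsupp u hux huy hu, hsupp v hvx hvy hv, ?_⟩
    have hGmono : ∀ a b : V, (delSet G {x, y}).Adj a b → G.Adj a b := fun a b h => h.1
    have hMmono : M.erase s(x, y) ⊆ M := Finset.erase_subset _ _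
    rcases hadj with h | h | h
    · exact Or.inl h.1
    · exact Or.inr (Or.inl (ec_mono hGmono hMmono h))
    · exact Or.inr (Or.inr (ec_mono hGmono hMmono h))
end

section
/- Let G be a graph, e_1,...,e_q pairwise disjoint edges of G (q ≥ 1), and let x be a vertex of G^{e_1···e_q}. Then deleting x from G^{e_1···e_q} gives the same graph as forming the even-connection graph of G \ x with respect to e_1,...,e_q: (G^{e_1···e_q}) \ x = (G \ x)^{e_1···e_q}. -/
variable {V : Type*}

lemma evenConnected_delSet {V : Type*} (G : SimpleGraph V) (M : Finset (Sym2 V))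
    (x u v : V) (hx : x ∉ mSupp M) (hu : u ≠ x) (hv : v ≠ x)
    (h : EvenConnected G M u v) : EvenConnected (delSet G {x}) M u v := by
  obtain ⟨r, p, hr, h0, h1, hadj, hMm, hinj⟩ := h
  have hne : ∀ k, k ≤ 2 * r + 1 → p k ≠ x := by
    intro k hk
    rcases Nat.eq_zero_or_pos k with rfl | hk0
    · rw [h0]; exact hu
    rcases eq_or_lt_of_le hk with rfl | hk'
    · rw [h1]; exact hv
    have hsupp : p k ∈ mSupp M := by
      rcases Nat.even_or_odd k with ⟨j, hj⟩ | ⟨j, hj⟩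
      · obtain ⟨m, rfl⟩ : ∃ m, j = m + 1 := ⟨j - 1, by omega⟩
        have hk2 : k = 2 * m + 2 := by omega
        have hm : m < r := by omega
        exact ⟨s(p (2 * m + 1), p (2 * m + 2)), hMm m hm, by
          rw [hk2]; simp⟩
      · have hj' : j < r := by omega
        have hk2 : k = 2 * j + 1 := by omega
        exact ⟨s(p (2 * j + 1), p (2 * j + 2)), hMm j hj', by
          rw [hk2]; simp⟩
    exact fun he => hx (he ▸ hsupp)
  refine ⟨r, p, hr, h0, h1, ?_, hMm, hinj⟩
  intro k hk
  exact ⟨hadj k hk, by simpa using hne k (by omega), by simpa using hne (k + 1) (by omega)⟩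

lemma evenConnected_of_delSet {V : Type*} (G : SimpleGraph V) (M : Finset (Sym2 V))
    (S : Set V) (u v : V) (h : EvenConnected (delSet G S) M u v) : EvenConnected G M u v := by
  obtain ⟨r, p, hr, h0, h1, hadj, hMm, hinj⟩ := h
  exact ⟨r, p, hr, h0, h1, fun k hk => (hadj k hk).1, hMm, hinj⟩

/-- deleting a vertex `x` outside the support of the matching commutes
with forming the even-connection graph: `(G^{e₁⋯e_q}) \ x = (G \ x)^{e₁⋯e_q}`. -/
theorem evenConnGraph_delete_vertex
    {V : Type*} [Fintype V] (G : SimpleGraph V) (M : Finset (Sym2 V)) (q : ℕ) (hq : 1 ≤ q)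
    (hM : IsMatchingOn G Finset.univ M) (hcard : M.card = q)
    (x : V) (hx : x ∉ mSupp M) :
    delSet (evenConnGraph G M) {x} = evenConnGraph (delSet G {x}) M := by
  ext u v
  constructor
  · rintro ⟨⟨hne, hu, hv, h⟩, hux, hvx⟩
    simp only [Set.mem_singleton_iff] at hux hvx
    refine ⟨hne, hu, hv, ?_⟩
    rcases h with h | h | h
    · exact Or.inl ⟨h, hux, hvx⟩
    · exact Or.inr (Or.inl (evenConnected_delSet G M x u v hx hux hvx h))
    · exact Or.inr (Or.inr (evenConnected_delSet G M x v u hx hvx hux h))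
  · rintro ⟨hne, hu, hv, h⟩
    have hux : u ≠ x := by
      rintro rfl
      rcases h with h | h | h
      · exact h.2.1 rfl
      · obtain ⟨r, p, hr, h0, h1, hadj, _, _⟩ := h
        exact ((hadj 0 (by omega)).2.1) (by simp [h0])
      · obtain ⟨r, p, hr, h0, h1, hadj, _, _⟩ := h
        exact ((hadj (2 * r) (by omega)).2.2) (by simp [h1])
    have hvx : v ≠ x := by
      rintro rfl
      rcases h with h | h | h
      · exact h.2.2 rfl
      · obtain ⟨r, p, hr, h0, h1, hadj, _, _⟩ := h
        exact ((hadj (2 * r) (by omega)).2.2) (by simp [h1])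
      · obtain ⟨r, p, hr, h0, h1, hadj, _, _⟩ := h
        exact ((hadj 0 (by omega)).2.1) (by simp [h0])
    refine ⟨⟨hne, hu, hv, ?_⟩, by simpa using hux, by simpa using hvx⟩
    rcases h with h | h | h
    · exact Or.inl h.1
    · exact Or.inr (Or.inl (evenConnected_of_delSet G M {x} u v h))
    · exact Or.inr (Or.inr (evenConnected_of_delSet G M {x} v u h))
end

section
/- Let H be a graph on n vertices containing an odd cycle, with ℓ the length of a shortest odd cycle of H, and let G = W(H). If 1 ≤ q < ⌈ℓ/2⌉ or n − ⌊ℓ/2⌋ < q ≤ ν(G), then MF^q(G) is pure, i.e., every facet has cardinality n + q − 1. -/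
variable {V : Type*}

namespace MFAux
open Sum Finset

variable {U : Type*}

def AdjF (G : SimpleGraph U) (F : Finset U) (v w : U) : Prop :=
  G.Adj v w ∧ v ∈ F ∧ w ∈ F

lemma AdjF.symm {G : SimpleGraph U} {F : Finset U} {v w : U} (h : AdjF G F v w) :
    AdjF G F w v := ⟨h.1.symm, h.2.2, h.2.1⟩

lemma AdjF.ne {G : SimpleGraph U} {F : Finset U} {v w : U} (h : AdjF G F v w) :
    v ≠ w := h.1.ne

def IsPartner (G : SimpleGraph U) (F : Finset U) (f : U → Option U) : Prop :=
  ∀ v w, f v = some w → AdjF G F v w ∧ f w = some v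

section Conv
variable [Fintype U] [DecidableEq U] {G : SimpleGraph U} {F : Finset U}

noncomputable def mcard (f : U → Option U) : ℕ :=
  (Finset.univ.filter (fun v => (f v).isSome)).card

lemma mcard_def (f : U → Option U) :
    mcard f = (Finset.univ.filter (fun v => (f v).isSome)).card := rfl

lemma conv1 (M : Finset (Sym2 U)) :
    IsMatchingOn G F M →
    ∃ f, IsPartner G F f ∧ mcard f = 2 * M.card ∧
      ∀ v w, f v = some w → s(v, w) ∈ M := by
  classical
  induction M using Finset.induction_on with
  | empty =>
    intro _
    refine ⟨fun _ => none, ?_, ?_, ?_⟩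
    · intro v w h; simp at h
    · simp [mcard_def]
    · intro v w h; simp at h
  | @insert e Ms he ih =>
    intro hM
    have hMs : IsMatchingOn G F Ms := ⟨fun e' h' => hM.1 e' (mem_insert_of_mem h'),
      fun e' h' => hM.2.1 e' (mem_insert_of_mem h'),
      fun e' h' e'' h'' => hM.2.2 e' (mem_insert_of_mem h') e'' (mem_insert_of_mem h'')⟩
    obtain ⟨f₀, hp₀, hc₀, hm₀⟩ := ih hMs
    revert he hM
    induction e using Sym2.ind with
    | _ x y =>
    intro he hM
    have hadj : G.Adj x y := (SimpleGraph.mem_edgeSet G).1 (hM.1 _ (mem_insert_self _ _))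
    have hxy : x ≠ y := hadj.ne
    have hxF : x ∈ F := hM.2.1 _ (mem_insert_self _ _) x (by simp)
    have hyF : y ∈ F := hM.2.1 _ (mem_insert_self _ _) y (by simp)
    have key : ∀ z, z ∈ s(x,y) → f₀ z = none := by
      intro z hz
      cases hfz : f₀ z with
      | none => rfl
      | some w =>
        exfalso
        have hmem := hm₀ z w hfz
        have hne : s(x,y) ≠ s(z,w) := fun hEq => he (hEq ▸ hmem)
        exact hM.2.2 _ (mem_insert_self _ _) _ (mem_insert_of_mem hmem) hne z hz (by simp)
    have hx0 : f₀ x = none := key x (by simp)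
    have hy0 : f₀ y = none := key y (by simp)
    set f : U → Option U := Function.update (Function.update f₀ x (some y)) y (some x)
      with hfdef
    have hfy : f y = some x := by simp [hfdef]
    have hfx : f x = some y := by
      rw [hfdef, Function.update_of_ne hxy, Function.update_self]
    have hfother : ∀ z, z ≠ x → z ≠ y → f z = f₀ z := by
      intro z hzx hzy
      rw [hfdef, Function.update_of_ne hzy, Function.update_of_ne hzx]
    refine ⟨f, ?_, ?_, ?_⟩
    · intro v w hvw
      rcases eq_or_ne v x with rfl | hvx
      · rw [hfx] at hvw; obtain rfl := Option.some.inj hvw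
        exact ⟨⟨hadj, hxF, hyF⟩, hfy⟩
      · rcases eq_or_ne v y with rfl | hvy
        · rw [hfy] at hvw; obtain rfl := Option.some.inj hvw
          exact ⟨⟨hadj.symm, hyF, hxF⟩, hfx⟩
        · rw [hfother v hvx hvy] at hvw
          obtain ⟨hA, hsym⟩ := hp₀ v w hvw
          have hwx : w ≠ x := by
            intro h; subst h; rw [hx0] at hsym; cases hsym
          have hwy : w ≠ y := by
            intro h; subst h; rw [hy0] at hsym; cases hsym
          exact ⟨hA, by rw [hfother w hwx hwy]; exact hsym⟩
    · have hset : (Finset.univ.filter (fun v => (f v).isSome)) =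
          insert x (insert y (Finset.univ.filter (fun v => (f₀ v).isSome))) := by
        ext z
        simp only [mem_filter, mem_univ, true_and, mem_insert]
        constructor
        · intro hz
          rcases eq_or_ne z x with rfl | hzx
          · exact Or.inl rfl
          rcases eq_or_ne z y with rfl | hzy
          · exact Or.inr (Or.inl rfl)
          · rw [hfother z hzx hzy] at hz; exact Or.inr (Or.inr hz)
        · intro hz
          rcases hz with rfl | rfl | hz
          · rw [hfx]; rfl
          · rw [hfy]; rfl
          · rcases eq_or_ne z x with rfl | hzx
            · rw [hfx]; rfl
            rcases eq_or_ne z y with rfl | hzy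
            · rw [hfy]; rfl
            · rw [hfother z hzx hzy]; exact hz
      have hxnot : x ∉ insert y (Finset.univ.filter (fun v => (f₀ v).isSome)) := by
        simp [hxy, hx0]
      have hynot : y ∉ (Finset.univ.filter (fun v => (f₀ v).isSome)) := by
        simp [hy0]
      rw [mcard_def, hset, card_insert_of_notMem hxnot, card_insert_of_notMem hynot,
        card_insert_of_notMem he]
      rw [mcard_def] at hc₀
      omega
    · intro v w hvw
      rcases eq_or_ne v x with rfl | hvx
      · rw [hfx] at hvw; obtain rfl := Option.some.inj hvw
        exact mem_insert_self _ _
      · rcases eq_or_ne v y with rfl | hvy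
        · rw [hfy] at hvw; obtain rfl := Option.some.inj hvw
          rw [Sym2.eq_swap]; exact mem_insert_self _ _
        · rw [hfother v hvx hvy] at hvw
          exact mem_insert_of_mem (hm₀ v w hvw)

lemma conv2 : ∀ (N : ℕ) (f : U → Option U), IsPartner G F f → mcard f = N →
    ∃ M : Finset (Sym2 U), IsMatchingOn G F M ∧ mcard f = 2 * M.card ∧
      ∀ e ∈ M, ∀ u ∈ e, (f u).isSome := by
  classical
  intro N
  induction N using Nat.strong_induction_on with
  | _ N ih =>
  intro f hf hN
  by_cases hne : (Finset.univ.filter (fun v => (f v).isSome)).Nonempty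
  · obtain ⟨v, hv⟩ := hne
    rw [mem_filter] at hv
    obtain ⟨w, hw⟩ := Option.isSome_iff_exists.1 hv.2
    obtain ⟨hAvw, hsym⟩ := hf v w hw
    have hvwne : v ≠ w := hAvw.ne
    set f' : U → Option U := Function.update (Function.update f v none) w none
      with hf'def
    have hf'v : f' v = none := by
      rw [hf'def, Function.update_of_ne hvwne, Function.update_self]
    have hf'w : f' w = none := by simp [hf'def]
    have hf'other : ∀ z, z ≠ v → z ≠ w → f' z = f z := fun z hzv hzw => by
      rw [hf'def, Function.update_of_ne hzw, Function.update_of_ne hzv]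
    have hf' : IsPartner G F f' := by
      intro a b hab
      have hav : a ≠ v := fun h => by rw [h, hf'v] at hab; cases hab
      have haw : a ≠ w := fun h => by rw [h, hf'w] at hab; cases hab
      rw [hf'other a hav haw] at hab
      obtain ⟨hA, hs⟩ := hf a b hab
      have hbv : b ≠ v := by
        intro h; rw [h] at hs; rw [hw] at hs; exact haw (Option.some.inj hs).symm
      have hbw : b ≠ w := by
        intro h; rw [h] at hs; rw [hsym] at hs; exact hav (Option.some.inj hs).symm
      exact ⟨hA, by rw [hf'other b hbv hbw]; exact hs⟩
    have hsub : ({v, w} : Finset U) ⊆ Finset.univ.filter (fun z => (f z).isSome) := by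
      intro z hz
      rcases mem_insert.1 hz with rfl | hz
      · simp [hw]
      · rw [mem_singleton] at hz; subst hz; simp [hsym]
    have hcard' : mcard f' = N - 2 := by
      have hset : Finset.univ.filter (fun z => (f' z).isSome) =
          (Finset.univ.filter (fun z => (f z).isSome)) \ {v, w} := by
        ext z
        simp only [mem_filter, mem_univ, true_and, mem_sdiff, mem_insert, mem_singleton]
        constructor
        · intro hz
          have hzv : z ≠ v := fun h => by rw [h, hf'v] at hz; simp at hz
          have hzw : z ≠ w := fun h => by rw [h, hf'w] at hz; simp at hz
          rw [hf'other z hzv hzw] at hz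
          exact ⟨hz, by tauto⟩
        · rintro ⟨hz, hnz⟩
          push_neg at hnz
          rw [hf'other z hnz.1 hnz.2]; exact hz
      rw [mcard_def, hset, card_sdiff_of_subset hsub]
      rw [card_insert_of_notMem (by simp [hvwne]), card_singleton]
      rw [mcard_def] at hN
      omega
    have hNge : 2 ≤ N := by
      rw [← hN, mcard_def]
      calc 2 = ({v, w} : Finset U).card := by
            rw [card_insert_of_notMem (by simp [hvwne]), card_singleton]
      _ ≤ _ := card_le_card hsub
    obtain ⟨M', hM', hc', hcov'⟩ := ih (N - 2) (by omega) f' hf' hcard'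
    have hnotin : s(v, w) ∉ M' := by
      intro h
      have h1 := hcov' _ h v (by simp)
      rw [hf'v] at h1; simp at h1
    refine ⟨insert s(v, w) M', ⟨?_, ?_, ?_⟩, ?_, ?_⟩
    · intro e heM
      rcases mem_insert.1 heM with rfl | heM
      · exact (SimpleGraph.mem_edgeSet G).2 hAvw.1
      · exact hM'.1 e heM
    · intro e heM u hu
      rcases mem_insert.1 heM with rfl | heM
      · rcases Sym2.mem_iff.1 hu with rfl | rfl
        · exact hAvw.2.1
        · exact hAvw.2.2
      · exact hM'.2.1 e heM u hu
    · intro e heM e' heM' hnee u hu hu'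
      rcases mem_insert.1 heM with rfl | heM <;> rcases mem_insert.1 heM' with rfl | heM'
      · exact hnee rfl
      · have h1 := hcov' e' heM' u hu'
        rcases Sym2.mem_iff.1 hu with rfl | rfl
        · rw [hf'v] at h1; simp at h1
        · rw [hf'w] at h1; simp at h1
      · have h1 := hcov' e heM u hu
        rcases Sym2.mem_iff.1 hu' with rfl | rfl
        · rw [hf'v] at h1; simp at h1
        · rw [hf'w] at h1; simp at h1
      · exact hM'.2.2 e heM e' heM' hnee u hu hu'
    · rw [card_insert_of_notMem hnotin, hN]
      rw [hcard'] at hc'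
      omega
    · intro e heM u hu
      rcases mem_insert.1 heM with rfl | heM
      · rcases Sym2.mem_iff.1 hu with rfl | rfl
        · simp [hw]
        · simp [hsym]
      · have h1 := hcov' e heM u hu
        have hzv : u ≠ v := fun h => by rw [h, hf'v] at h1; simp at h1
        have hzw : u ≠ w := fun h => by rw [h, hf'w] at h1; simp at h1
        rw [hf'other u hzv hzw] at h1; exact h1
  · refine ⟨∅, ⟨by simp, by simp, by simp⟩, ?_, by simp⟩
    rw [mcard_def, not_nonempty_iff_eq_empty.1 hne]; simp

end Conv
end MFAux


namespace MFAux
open Sum Finset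

section Walks
variable {U : Type*} [Fintype U] [DecidableEq U] {G : SimpleGraph U} {F : Finset U}

def Expo (F : Finset U) (f : U → Option U) (v : U) : Prop := v ∈ F ∧ f v = none

def IsAltWalk (G : SimpleGraph U) (F : Finset U) (f : U → Option U)
    (w : ℕ → U) (t : ℕ) : Prop :=
  Expo F f (w 0) ∧ ∀ i < t, AdjF G F (w i) (w (i + 1)) ∧ (f (w i) = some (w (i + 1)) ↔ Odd i)

/-- Odd blossom-cycle data. -/
def OCD (G : SimpleGraph U) (F : Finset U) (f : U → Option U) : Prop :=
  ∃ (c : ℕ) (z : ℕ → U), Odd c ∧ 3 ≤ c ∧ (∀ i < c, ∀ j < c, z i = z j → i = j) ∧ z c = z 0 ∧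
    ∀ m < c, AdjF G F (z m) (z (m + 1)) ∧ (f (z m) = some (z (m + 1)) ↔ Odd m)

/-- An odd alternating closed walk (junctions non-matching) contains an odd blossom. -/
lemma W2 {f : U → Option U} (hf : IsPartner G F f) :
    ∀ c, Odd c → ∀ z : ℕ → U,
      (∀ m < c, AdjF G F (z m) (z (m + 1)) ∧ (f (z m) = some (z (m + 1)) ↔ Odd m)) →
      z c = z 0 → OCD G F f := by
  intro c
  induction c using Nat.strong_induction_on with
  | _ c ih =>
  intro hodd z hz hcl
  by_cases hinj : ∀ i < c, ∀ j < c, z i = z j → i = j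
  · have hc1 : c ≠ 1 := by
      intro h; subst h
      exact (hz 0 (by norm_num)).1.ne (by rw [hcl])
    have hc3 : 3 ≤ c := by rcases hodd with ⟨k, hk⟩; omega
    exact ⟨c, z, hodd, hc3, hinj, hcl, hz⟩
  · push_neg at hinj
    obtain ⟨i0, hi0, j0, hj0, hz00, hne0⟩ := hinj
    have hex : ∃ a b, a < b ∧ b < c ∧ z a = z b := by
      rcases lt_or_gt_of_ne hne0 with h | h
      exacts [⟨i0, j0, h, hj0, hz00⟩, ⟨j0, i0, h, hi0, hz00.symm⟩]
    obtain ⟨a, b, hab, hbc, hzab⟩ := hex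
    rw [Nat.odd_iff] at hodd
    by_cases hgap : (b - a) % 2 = 0
    · -- splice out the even-length repeat
      refine ih (c - (b - a)) (by omega) (by rw [Nat.odd_iff]; omega)
        (fun m => if m ≤ a then z m else z (m + (b - a))) ?_ ?_
      · intro m hm
        skip
        rcases lt_trichotomy m a with h | h | h
        · rw [if_pos (by omega : m ≤ a), if_pos (by omega : m + 1 ≤ a)]
          exact hz m (by omega)
        · subst h
          rw [if_pos (le_refl m), if_neg (by omega)]
          have he1 : m + 1 + (b - m) = b + 1 := by omega
          rw [he1, hzab]
          have hb := hz b (by omega)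
          refine ⟨hb.1, ?_⟩
          rw [hb.2, Nat.odd_iff, Nat.odd_iff]; omega
        · rw [if_neg (by omega), if_neg (by omega)]
          have he1 : m + 1 + (b - a) = m + (b - a) + 1 := by omega
          rw [he1]
          have he := hz (m + (b - a)) (by omega)
          refine ⟨he.1, ?_⟩
          rw [he.2, Nat.odd_iff, Nat.odd_iff]; omega
      · skip
        rw [if_neg (by omega : ¬ (c - (b - a) ≤ a)), if_pos (Nat.zero_le a)]
        have he1 : c - (b - a) + (b - a) = c := by omega
        rw [he1, hcl]
    · -- odd gap
      have hgap1 : b - a ≠ 1 := by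
        intro h
        have hb : b = a + 1 := by omega
        exact (hz a (by omega)).1.ne (by rw [hb] at hzab; exact hzab)
      by_cases hpa : a % 2 = 0
      · refine ih (b - a) (by omega) (by rw [Nat.odd_iff]; omega)
          (fun m => z (a + m)) ?_ ?_
        · intro m hm
          skip
          have he1 : a + (m + 1) = a + m + 1 := by omega
          rw [he1]
          have he := hz (a + m) (by omega)
          refine ⟨he.1, ?_⟩
          rw [he.2, Nat.odd_iff, Nat.odd_iff]; omega
        · skip
          have he1 : a + (b - a) = b := by omega
          rw [he1, ← hzab]
          rfl
      · -- a odd: shrink the two matched junction edges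
        have h1 : f (z a) = some (z (a + 1)) :=
          (hz a (by omega)).2.mpr (by rw [Nat.odd_iff]; omega)
        have h2 : f (z (b - 1)) = some (z b) := by
          have he := (hz (b - 1) (by omega)).2.mpr (by rw [Nat.odd_iff]; omega)
          have he1 : b - 1 + 1 = b := by omega
          rw [he1] at he; exact he
        have h3 : f (z b) = some (z (b - 1)) := (hf _ _ h2).2
        rw [← hzab, h1] at h3
        have hkey : z (a + 1) = z (b - 1) := Option.some.inj h3
        refine ih (b - a - 2) (by omega) (by rw [Nat.odd_iff]; omega)
          (fun m => z (a + 1 + m)) ?_ ?_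
        · intro m hm
          skip
          have he1 : a + 1 + (m + 1) = a + 1 + m + 1 := by omega
          rw [he1]
          have he := hz (a + 1 + m) (by omega)
          refine ⟨he.1, ?_⟩
          rw [he.2, Nat.odd_iff, Nat.odd_iff]; omega
        · skip
          have he1 : a + 1 + (b - a - 2) = b - 1 := by omega
          rw [he1, ← hkey]

/-- Flipping an augmenting path: produces a strictly bigger partner function. -/
lemma flip_aug {f : U → Option U} (hf : IsPartner G F f) {w : ℕ → U} {t : ℕ}
    (hodd : Odd t) (hw : IsAltWalk G F f w t) (hexp : Expo F f (w t))
    (hinj : ∀ i ≤ t, ∀ j ≤ t, w i = w j → i = j) :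
    ∃ g, IsPartner G F g ∧ mcard g = mcard f + 2 := by
  classical
  rw [Nat.odd_iff] at hodd
  set φ : ℕ → ℕ := fun i => if i % 2 = 0 then i + 1 else i - 1 with hφdef
  set g : U → Option U :=
    fun v => if h : ∃ i, i ≤ t ∧ w i = v then some (w (φ h.choose)) else f v with hgdef
  have hgw : ∀ i, i ≤ t → g (w i) = some (w (φ i)) := by
    intro i hi
    have hex : ∃ j, j ≤ t ∧ w j = w i := ⟨i, hi, rfl⟩
    have h1 : g (w i) = some (w (φ hex.choose)) := dif_pos hex
    rw [h1, hinj _ hex.choose_spec.1 _ hi hex.choose_spec.2]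
  have hgoff : ∀ v, (¬ ∃ i, i ≤ t ∧ w i = v) → g v = f v := by
    intro v hv
    rw [hgdef]; dsimp only; rw [dif_neg hv]
  have hφt : ∀ i, i ≤ t → φ i ≤ t := by
    intro i hi; rw [hφdef]; dsimp only; split <;> omega
  have hφφ : ∀ i, i ≤ t → φ (φ i) = i := by
    intro i hi; rw [hφdef]; dsimp only; split
    · rename_i h; rw [if_neg (by omega)]; omega
    · rename_i h; rw [if_pos (by omega)]; omega
  have hadjφ : ∀ i, i ≤ t → AdjF G F (w i) (w (φ i)) := by
    intro i hi
    by_cases hp : i % 2 = 0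
    · have h0 : φ i = i + 1 := by rw [hφdef]; simp [hp]
      rw [h0]; exact (hw.2 i (by omega)).1
    · have h1 : φ i = i - 1 := by rw [hφdef]; simp [hp]
      have h2 : i - 1 + 1 = i := by omega
      have h3 := (hw.2 (i - 1) (by omega)).1
      rw [h2] at h3
      rw [h1]; exact h3.symm
  have hfin : ∀ i, i ≤ t → i ≠ 0 → i ≠ t → ∃ j, j ≤ t ∧ f (w i) = some (w j) := by
    intro i hi hi0 hit
    by_cases hp : i % 2 = 1
    · exact ⟨i + 1, by omega, (hw.2 i (by omega)).2.mpr (by rw [Nat.odd_iff]; exact hp)⟩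
    · have h2 : i - 1 + 1 = i := by omega
      have h1 := (hw.2 (i - 1) (by omega)).2.mpr (by rw [Nat.odd_iff]; omega)
      rw [h2] at h1
      exact ⟨i - 1, by omega, (hf _ _ h1).2⟩
  refine ⟨g, ?_, ?_⟩
  · intro v u hgvu
    by_cases hex : ∃ i, i ≤ t ∧ w i = v
    · obtain ⟨i, hit, rfl⟩ := hex
      rw [hgw i hit] at hgvu
      obtain rfl := Option.some.inj hgvu.symm
      exact ⟨hadjφ i hit, by rw [hgw (φ i) (hφt i hit), hφφ i hit]⟩
    · rw [hgoff v hex] at hgvu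
      obtain ⟨hA, hs⟩ := hf v u hgvu
      refine ⟨hA, ?_⟩
      by_cases hex2 : ∃ i, i ≤ t ∧ w i = u
      · exfalso
        obtain ⟨j, hjt, rfl⟩ := hex2
        by_cases hj0 : j = 0
        · subst hj0; rw [hw.1.2] at hs; cases hs
        by_cases hjt' : j = t
        · subst hjt'; rw [hexp.2] at hs; cases hs
        obtain ⟨j', hj't, hj'⟩ := hfin j hjt hj0 hjt'
        rw [hj'] at hs
        exact hex ⟨j', hj't, (Option.some.inj hs)⟩
      · rw [hgoff u hex2]; exact hs
  · have hset : (Finset.univ.filter (fun v => (g v).isSome)) =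
        insert (w 0) (insert (w t) (Finset.univ.filter (fun v => (f v).isSome))) := by
      ext x
      simp only [mem_filter, mem_univ, true_and, mem_insert]
      constructor
      · intro hx
        by_cases hex : ∃ i, i ≤ t ∧ w i = x
        · obtain ⟨i, hit, rfl⟩ := hex
          by_cases hi0 : i = 0
          · exact Or.inl (by rw [hi0])
          by_cases hit' : i = t
          · exact Or.inr (Or.inl (by rw [hit']))
          · obtain ⟨j, _, hj⟩ := hfin i hit hi0 hit'
            exact Or.inr (Or.inr (by rw [hj]; rfl))
        · rw [hgoff x hex] at hx
          exact Or.inr (Or.inr hx)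
      · intro hx
        rcases hx with rfl | rfl | hx
        · rw [hgw 0 (by omega)]; rfl
        · rw [hgw t (le_refl t)]; rfl
        · by_cases hex : ∃ i, i ≤ t ∧ w i = x
          · obtain ⟨i, hit, rfl⟩ := hex
            rw [hgw i hit]; rfl
          · rw [hgoff x hex]; exact hx
    have h0t : w 0 ≠ w t := by
      intro h; have := hinj 0 (by omega) t (le_refl t) h; omega
    have h0f : (f (w 0)).isSome = false := by rw [hw.1.2]; rfl
    have htf : (f (w t)).isSome = false := by rw [hexp.2]; rfl
    rw [mcard_def, mcard_def, hset, card_insert_of_notMem (by simp [h0t, h0f]),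
      card_insert_of_notMem (by simp [htf])]

/-- An odd alternating walk between exposed vertices yields a blossom (if f maximum). -/
lemma W1 {f : U → Option U} (hf : IsPartner G F f)
    (hb : ∀ g, IsPartner G F g → mcard g ≤ mcard f) :
    ∀ t, Odd t → ∀ w : ℕ → U, IsAltWalk G F f w t → Expo F f (w t) → OCD G F f := by
  intro t
  induction t using Nat.strong_induction_on with
  | _ t ih =>
  intro hodd w hw hexp
  by_cases hinj : ∀ i ≤ t, ∀ j ≤ t, w i = w j → i = j
  · obtain ⟨g, hg, hgc⟩ := flip_aug hf hodd hw hexp hinj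
    have := hb g hg
    omega
  · push_neg at hinj
    obtain ⟨i0, hi0, j0, hj0, hz00, hne0⟩ := hinj
    have hex : ∃ a b, a < b ∧ b ≤ t ∧ w a = w b := by
      rcases lt_or_gt_of_ne hne0 with h | h
      exacts [⟨i0, j0, h, hj0, hz00⟩, ⟨j0, i0, h, hi0, hz00.symm⟩]
    obtain ⟨a, b, hab, hbt, hzab⟩ := hex
    rw [Nat.odd_iff] at hodd
    by_cases hgap : (b - a) % 2 = 0
    · -- splice, still an exposed-to-exposed odd walk
      refine ih (t - (b - a)) (by omega) (by rw [Nat.odd_iff]; omega)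
        (fun m => if m ≤ a then w m else w (m + (b - a))) ⟨?_, ?_⟩ ?_
      · dsimp only; rw [if_pos (Nat.zero_le a)]; exact hw.1
      · intro m hm
        dsimp only
        rcases lt_trichotomy m a with h | h | h
        · rw [if_pos (by omega : m ≤ a), if_pos (by omega : m + 1 ≤ a)]
          exact hw.2 m (by omega)
        · subst h
          rw [if_pos (le_refl m), if_neg (by omega)]
          have he1 : m + 1 + (b - m) = b + 1 := by omega
          rw [he1, hzab]
          have hb' := hw.2 b (by omega)
          refine ⟨hb'.1, ?_⟩
          rw [hb'.2, Nat.odd_iff, Nat.odd_iff]; omega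
        · rw [if_neg (by omega), if_neg (by omega)]
          have he1 : m + 1 + (b - a) = m + (b - a) + 1 := by omega
          rw [he1]
          have he := hw.2 (m + (b - a)) (by omega)
          refine ⟨he.1, ?_⟩
          rw [he.2, Nat.odd_iff, Nat.odd_iff]; omega
      · skip
        by_cases hle : t - (b - a) ≤ a
        · rw [if_pos hle]
          have h1 : b = t := by omega
          have h2 : t - (b - a) = a := by omega
          rw [h2, hzab, h1]; exact hexp
        · rw [if_neg hle]
          have he1 : t - (b - a) + (b - a) = t := by omega
          rw [he1]; exact hexp
    · have hgap1 : b - a ≠ 1 := by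
        intro h
        have hb' : b = a + 1 := by omega
        exact (hw.2 a (by omega)).1.ne (by rw [hb'] at hzab; exact hzab)
      by_cases hpa : a % 2 = 0
      · refine W2 hf (b - a) (by rw [Nat.odd_iff]; omega) (fun m => w (a + m)) ?_ ?_
        · intro m hm
          skip
          have he1 : a + (m + 1) = a + m + 1 := by omega
          rw [he1]
          have he := hw.2 (a + m) (by omega)
          refine ⟨he.1, ?_⟩
          rw [he.2, Nat.odd_iff, Nat.odd_iff]; omega
        · skip
          have he1 : a + (b - a) = b := by omega
          rw [he1, ← hzab]
          rfl
      · have h1 : f (w a) = some (w (a + 1)) :=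
          (hw.2 a (by omega)).2.mpr (by rw [Nat.odd_iff]; omega)
        have h2 : f (w (b - 1)) = some (w b) := by
          have he := (hw.2 (b - 1) (by omega)).2.mpr (by rw [Nat.odd_iff]; omega)
          have he1 : b - 1 + 1 = b := by omega
          rw [he1] at he; exact he
        have h3 : f (w b) = some (w (b - 1)) := (hf _ _ h2).2
        rw [← hzab, h1] at h3
        have hkey : w (a + 1) = w (b - 1) := Option.some.inj h3
        refine W2 hf (b - a - 2) (by rw [Nat.odd_iff]; omega) (fun m => w (a + 1 + m)) ?_ ?_
        · intro m hm
          skip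
          have he1 : a + 1 + (m + 1) = a + 1 + m + 1 := by omega
          rw [he1]
          have he := hw.2 (a + 1 + m) (by omega)
          refine ⟨he.1, ?_⟩
          rw [he.2, Nat.odd_iff, Nat.odd_iff]; omega
        · skip
          have he1 : a + 1 + (b - a - 2) = b - 1 := by omega
          rw [he1, ← hkey]

end Walks
end MFAux


namespace MFAux
open Sum Finset

section Stab
variable {U : Type*} [Fintype U] [DecidableEq U] {G : SimpleGraph U} {F : Finset U}

/-- Stability: a vertex exposed by some maximum matching `f'` is reachable from an
`f`-exposed vertex by an even alternating walk (or a blossom for `f'` exists). -/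
lemma stab {f f' : U → Option U} (hf : IsPartner G F f) (hf' : IsPartner G F f')
    (hbf' : ∀ g, IsPartner G F g → mcard g ≤ mcard f')
    {v : U} (hvF : v ∈ F) (hv' : f' v = none) :
    (∃ w t, IsAltWalk G F f w t ∧ Even t ∧ w t = v) ∨ OCD G F f' := by
  classical
  set S : ℕ → Option U := fun n =>
    Nat.rec (motive := fun _ => Option U) (some v)
      (fun i prev => prev.bind (fun x => if i % 2 = 0 then f x else f' x)) n with hSdef
  have hS0 : S 0 = some v := rfl
  have hSsucc : ∀ i, S (i + 1) = (S i).bind (fun x => if i % 2 = 0 then f x else f' x) :=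
    fun i => rfl
  have hpred : ∀ k x, S (k + 1) = some x → ∃ y, S k = some y ∧
      ((k % 2 = 0 ∧ f y = some x ∧ f x = some y) ∨
       (k % 2 = 1 ∧ f' y = some x ∧ f' x = some y)) := by
    intro k x hk
    rw [hSsucc] at hk
    cases hSk : S k with
    | none => rw [hSk] at hk; exact absurd hk (by simp)
    | some y =>
      rw [hSk] at hk
      have hk2 : (if k % 2 = 0 then f y else f' y) = some x := hk
      by_cases hpar : k % 2 = 0
      · rw [if_pos hpar] at hk2
        exact ⟨y, rfl, Or.inl ⟨hpar, hk2, (hf _ _ hk2).2⟩⟩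
      · rw [if_neg hpar] at hk2
        exact ⟨y, rfl, Or.inr ⟨by omega, hk2, (hf' _ _ hk2).2⟩⟩
  have hinj : ∀ j i, i < j → ∀ x, S i = some x → S j = some x → False := by
    intro j
    induction j using Nat.strong_induction_on with
    | _ j ihj =>
    intro i hij x hSi hSj
    obtain ⟨jj, rfl⟩ : ∃ jj, j = jj + 1 := ⟨j - 1, by omega⟩
    obtain ⟨y, hSjj, hcase⟩ := hpred jj x hSj
    rcases Nat.eq_zero_or_pos i with rfl | hi0
    · have hxv : x = v := by rw [hS0] at hSi; exact (Option.some.inj hSi).symm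
      subst hxv
      rcases hcase with ⟨hp, h1, h2⟩ | ⟨hp, h1, h2⟩
      · have hS1 : S (0 + 1) = some y := by
          have e := hSsucc 0
          rw [hSi] at e
          rw [e]
          show (if 0 % 2 = 0 then f x else f' x) = some y
          rw [if_pos (by omega)]; exact h2
        rcases lt_trichotomy 1 jj with h | h | h
        · exact ihj jj (by omega) 1 h y hS1 hSjj
        · omega
        · have hjj0 : jj = 0 := by omega
          subst hjj0
          have hyx : y = x := by rw [hS0] at hSjj; exact (Option.some.inj hSjj).symm
          subst hyx
          exact (hf _ _ h2).1.ne rfl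
      · rw [hv'] at h2; cases h2
    · obtain ⟨ii, rfl⟩ : ∃ ii, i = ii + 1 := ⟨i - 1, by omega⟩
      obtain ⟨y', hSii, hcase'⟩ := hpred ii x hSi
      rcases hcase with ⟨hpj, hj1, hj2⟩ | ⟨hpj, hj1, hj2⟩ <;>
        rcases hcase' with ⟨hpi, hi1, hi2⟩ | ⟨hpi, hi1, hi2⟩
      · have hyy : y = y' := by rw [hj2] at hi2; exact Option.some.inj hi2
        subst hyy
        exact ihj jj (by omega) ii (by omega) y hSii hSjj
      · -- jj even (f-edge into j), ii odd so i = ii+1 is even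
        have hSi1 : S (ii + 1 + 1) = some y := by
          have e := hSsucc (ii + 1)
          rw [hSi] at e
          rw [e]
          show (if (ii + 1) % 2 = 0 then f x else f' x) = some y
          rw [if_pos (by omega)]; exact hj2
        rcases lt_trichotomy (ii + 2) jj with h | h | h
        · exact ihj jj (by omega) (ii + 2) h y hSi1 hSjj
        · omega
        · have hjj : jj = ii + 1 := by omega
          subst hjj
          have hyx : y = x := by rw [hSi] at hSjj; exact (Option.some.inj hSjj).symm
          subst hyx
          exact (hf _ _ hj2).1.ne rfl
      · -- jj odd, ii even so i = ii+1 is odd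
        have hSi1 : S (ii + 1 + 1) = some y := by
          have e := hSsucc (ii + 1)
          rw [hSi] at e
          rw [e]
          show (if (ii + 1) % 2 = 0 then f x else f' x) = some y
          rw [if_neg (by omega)]; exact hj2
        rcases lt_trichotomy (ii + 2) jj with h | h | h
        · exact ihj jj (by omega) (ii + 2) h y hSi1 hSjj
        · omega
        · have hjj : jj = ii + 1 := by omega
          subst hjj
          have hyx : y = x := by rw [hSi] at hSjj; exact (Option.some.inj hSjj).symm
          subst hyx
          exact (hf' _ _ hj2).1.ne rfl
      · have hyy : y = y' := by rw [hj2] at hi2; exact Option.some.inj hi2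
        subst hyy
        exact ihj jj (by omega) ii (by omega) y hSii hSjj
  have hterm : ∃ m, S (m + 1) = none := by
    by_contra hco
    push_neg at hco
    have hall : ∀ i, ∃ x, S i = some x := by
      intro i
      cases i with
      | zero => exact ⟨v, hS0⟩
      | succ k =>
        cases hSk : S (k + 1) with
        | none => exact absurd hSk (hco k)
        | some x => exact ⟨x, rfl⟩
    choose sv hsv using hall
    obtain ⟨i, j, hne, heq⟩ := Finite.exists_ne_map_eq_of_infinite sv
    rcases lt_or_gt_of_ne hne with h | h
    · exact hinj j i h (sv i) (hsv i) (heq ▸ hsv j)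
    · exact hinj i j h (sv j) (hsv j) (heq.symm ▸ hsv i)
  obtain ⟨m, hmnone, hmmin⟩ : ∃ m, S (m + 1) = none ∧ ∀ k < m, S (k + 1) ≠ none :=
    ⟨Nat.find hterm, Nat.find_spec hterm, fun k hk => Nat.find_min hterm hk⟩
  have hnone_step : ∀ i k, S i = none → S (i + k) = none := by
    intro i k h
    induction k with
    | zero => exact h
    | succ n ihn =>
      have : i + (n + 1) = (i + n) + 1 := by omega
      rw [this, hSsucc, ihn]; rfl
  have hSm : ∃ x, S m = some x := by
    cases hm0 : m with
    | zero => exact ⟨v, hS0⟩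
    | succ k =>
      cases hSk : S (k + 1) with
      | none => exact absurd hSk (hmmin k (by omega))
      | some x => exact ⟨x, rfl⟩
  obtain ⟨xm, hxm⟩ := hSm
  set val : ℕ → U := fun i => (S i).getD v with hvaldef
  have hval : ∀ i, i ≤ m → S i = some (val i) := by
    intro i hi
    cases hSi : S i with
    | some x => rw [hvaldef]; dsimp only; rw [hSi]; rfl
    | none =>
      exfalso
      have h2 : S m = none := by
        have h3 := hnone_step i (m - i) hSi
        rwa [show i + (m - i) = m by omega] at h3
      rw [h2] at hxm; cases hxm
  have hv0 : val 0 = v := by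
    have h1 := hval 0 (by omega); rw [hS0] at h1; exact (Option.some.inj h1).symm
  have hvm : val m = xm := by
    have h1 := hval m (le_refl m); rw [hxm] at h1; exact (Option.some.inj h1).symm
  have hvalF : ∀ i, i ≤ m → val i ∈ F := by
    intro i hi
    cases i with
    | zero => rw [hv0]; exact hvF
    | succ k =>
      obtain ⟨y, hSk, hcase⟩ := hpred k (val (k + 1)) (hval (k + 1) hi)
      rcases hcase with ⟨_, h1, _⟩ | ⟨_, h1, _⟩
      · exact ((hf _ _ h1).1).2.2
      · exact ((hf' _ _ h1).1).2.2
  by_cases hmp : m % 2 = 0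
  · -- the walk reversed is an f-alternating even walk from an f-exposed vertex to v
    left
    have hfxm : f xm = none := by
      have h1 : S (m + 1) = f xm := by
        have e := hSsucc m
        rw [hxm] at e
        rw [e]
        show (if m % 2 = 0 then f xm else f' xm) = f xm
        rw [if_pos hmp]
      rw [← h1]; exact hmnone
    refine ⟨fun i => val (m - i), m, ⟨?_, ?_⟩, by rw [Nat.even_iff]; exact hmp, ?_⟩
    · show Expo F f (val (m - 0))
      rw [Nat.sub_zero, hvm]
      exact ⟨hvm ▸ hvalF m (le_refl m), hfxm⟩
    · intro i hi
      dsimp only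
      set k := m - i - 1 with hk
      have hik : m - i = k + 1 := by omega
      have hik2 : m - (i + 1) = k := by omega
      rw [hik, hik2]
      obtain ⟨y, hSk, hcase⟩ := hpred k (val (k + 1)) (hval (k + 1) (by omega))
      have hy : y = val k := by
        rw [hval k (by omega)] at hSk; exact (Option.some.inj hSk).symm
      subst hy
      rcases hcase with ⟨hp, h1, h2⟩ | ⟨hp, h1, h2⟩
      · -- f-edge (k even): position i odd
        refine ⟨(hf _ _ h1).1.symm, ?_⟩
        rw [h2]
        simp only [true_iff]
        rw [Nat.odd_iff]; omega
      · -- f'-edge (k odd): position i even; must show f (val (k+1)) ≠ some (val k)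
        refine ⟨(hf' _ _ h1).1.symm, ?_⟩
        rw [iff_false_intro (by rw [Nat.odd_iff]; omega : ¬ Odd i)]
        simp only [iff_false]
        intro hcon
        by_cases hi0 : i = 0
        · have hkm : k + 1 = m := by omega
          rw [hkm, hvm, hfxm] at hcon; cases hcon
        · have hk2m : k + 2 ≤ m := by omega
          have hS2 : S (k + 1 + 1) = some (val k) := by
            have e := hSsucc (k + 1)
            rw [hval (k + 1) (by omega)] at e
            rw [e]
            show (if (k + 1) % 2 = 0 then f (val (k + 1)) else f' (val (k + 1))) = some (val k)
            rw [if_pos (by omega)]; exact hcon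
          exact hinj (k + 1 + 1) k (by omega) (val k) (hval k (by omega)) hS2
    · show val (m - m) = v
      rw [Nat.sub_self]; exact hv0
  · -- m odd: the sequence itself is an f'-alternating odd walk between f'-exposed vertices
    right
    have hf'xm : f' xm = none := by
      have h1 : S (m + 1) = f' xm := by
        have e := hSsucc m
        rw [hxm] at e
        rw [e]
        show (if m % 2 = 0 then f xm else f' xm) = f' xm
        rw [if_neg hmp]
      rw [← h1]; exact hmnone
    refine W1 hf' hbf' m (by rw [Nat.odd_iff]; omega) val ⟨?_, ?_⟩ ?_
    · rw [hv0]; exact ⟨hvF, hv'⟩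
    · intro i hi
      obtain ⟨y, hSk, hcase⟩ := hpred i (val (i + 1)) (hval (i + 1) (by omega))
      have hy : y = val i := by
        rw [hval i (by omega)] at hSk; exact (Option.some.inj hSk).symm
      subst hy
      rcases hcase with ⟨hp, h1, h2⟩ | ⟨hp, h1, h2⟩
      · -- f-edge at even i: f'-alternation must be false here
        refine ⟨(hf _ _ h1).1, ?_⟩
        rw [iff_false_intro (by rw [Nat.odd_iff]; omega : ¬ Odd i)]
        simp only [iff_false]
        intro hcon
        by_cases hi0 : i = 0
        · subst hi0; rw [hv0, hv'] at hcon; cases hcon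
        · obtain ⟨y2, hSk2, hcase2⟩ := hpred (i - 1) (val i)
            (by rw [show i - 1 + 1 = i by omega]; exact hval i (by omega))
          have hy2 : y2 = val (i - 1) := by
            rw [hval (i - 1) (by omega)] at hSk2; exact (Option.some.inj hSk2).symm
          subst hy2
          rcases hcase2 with ⟨hp2, _, _⟩ | ⟨_, _, h23⟩
          · omega
          · rw [h23] at hcon
            have hvv : val (i + 1) = val (i - 1) := (Option.some.inj hcon).symm
            exact hinj (i + 1) (i - 1) (by omega) (val (i - 1))
              (hval (i - 1) (by omega)) (by rw [← hvv]; exact hval (i + 1) (by omega))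
      · exact ⟨(hf' _ _ h1).1, by rw [h1]; simp only [true_iff]; rw [Nat.odd_iff]; omega⟩
    · show Expo F f' (val m)
      rw [hvm]
      exact ⟨hvm ▸ hvalF m (le_refl m), hf'xm⟩

end Stab
end MFAux


namespace MFAux
open Sum Finset

section Cycle
variable {V : Type*} [Fintype V] [DecidableEq V]

lemma cycle_of_seq (H : SimpleGraph V) (x : ℕ → V) (c : ℕ) (hc3 : 3 ≤ c)
    (hadj : ∀ m < c, H.Adj (x m) (x (m + 1)))
    (hcl : x c = x 0)
    (hinj : ∀ i < c, ∀ j < c, x i = x j → i = j) :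
    ∃ (v : V) (p : H.Walk v v), p.IsCycle ∧ p.length = c := by
  have hbuild : ∀ k j, j + k = c → ∃ p : H.Walk (x j) (x c), p.length = k ∧
      p.support = (List.range (k + 1)).map (fun i => x (j + i)) ∧
      p.edges = (List.range k).map (fun i => s(x (j + i), x (j + i + 1))) := by
    intro k
    induction k with
    | zero =>
      intro j hj
      have hjc : j = c := by omega
      subst hjc
      exact ⟨SimpleGraph.Walk.nil, by simp, by simp [List.range_succ], by simp⟩
    | succ k ihk =>
      intro j hj
      obtain ⟨p, hl, hs, he⟩ := ihk (j + 1) (by omega)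
      have ha : H.Adj (x j) (x (j + 1)) := hadj j (by omega)
      refine ⟨SimpleGraph.Walk.cons ha p, by simp [hl], ?_, ?_⟩
      · rw [SimpleGraph.Walk.support_cons, hs]
        conv_rhs => rw [List.range_succ_eq_map, List.map_cons, List.map_map]
        rw [List.cons.injEq]
        refine ⟨by simp, ?_⟩
        apply List.map_congr_left
        intro i _
        show x (j + 1 + i) = x (j + Nat.succ i)
        congr 1
        omega
      · rw [SimpleGraph.Walk.edges_cons, he]
        conv_rhs => rw [List.range_succ_eq_map, List.map_cons, List.map_map]
        rw [List.cons.injEq]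
        refine ⟨by simp, ?_⟩
        apply List.map_congr_left
        intro i _
        show s(x (j + 1 + i), x (j + 1 + i + 1)) = s(x (j + Nat.succ i), x (j + Nat.succ i + 1))
        have h1 : j + 1 + i = j + Nat.succ i := by omega
        rw [h1]
  obtain ⟨p0, hl0, hs0, he0⟩ := hbuild (c - 1) 1 (by omega)
  have hadj01 : H.Adj (x 0) (x 1) := hadj 0 (by omega)
  set q : H.Walk (x 1) (x 0) := p0.copy rfl hcl with hqdef
  refine ⟨x 0, SimpleGraph.Walk.cons hadj01 q, ?_, ?_⟩
  · rw [SimpleGraph.Walk.cons_isCycle_iff]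
    constructor
    · rw [SimpleGraph.Walk.isPath_def, hqdef, SimpleGraph.Walk.support_copy, hs0]
      refine List.Nodup.map_on ?_ List.nodup_range
      intro i hi j hj hxx
      rw [List.mem_range] at hi hj
      have hi' : i < c - 1 + 1 := hi
      have hj' : j < c - 1 + 1 := hj
      by_cases hic : 1 + i = c <;> by_cases hjc : 1 + j = c
      · omega
      · exfalso
        rw [hic, hcl] at hxx
        have := hinj 0 (by omega) (1 + j) (by omega) hxx
        omega
      · exfalso
        rw [hjc, hcl] at hxx
        have := hinj (1 + i) (by omega) 0 (by omega) hxx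
        omega
      · have := hinj (1 + i) (by omega) (1 + j) (by omega) hxx
        omega
    · rw [hqdef, SimpleGraph.Walk.edges_copy, he0]
      intro hmem
      rw [List.mem_map] at hmem
      obtain ⟨i, hi, heq⟩ := hmem
      rw [List.mem_range] at hi
      rw [Sym2.eq_iff] at heq
      rcases heq with ⟨h1, h2⟩ | ⟨h1, h2⟩
      · have := hinj (1 + i) (by omega) 0 (by omega) h1
        omega
      · have hi1 : 1 + i < c := by omega
        have := hinj (1 + i) hi1 1 (by omega) h1
        have hi0 : i = 0 := by omega
        subst hi0
        have h3 : x 2 = x 0 := by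
          have h4 : 1 + 0 + 1 = 2 := by omega
          rw [h4] at h2; exact h2
        have := hinj 2 (by omega) 0 (by omega) h3
        omega
  · rw [SimpleGraph.Walk.length_cons, hqdef, SimpleGraph.Walk.length_copy, hl0]
    omega

end Cycle

section Contra
variable {V : Type*} [Fintype V] [DecidableEq V]

/-- The final counting contradiction from a blossom. -/
lemma ocd_contra {H : SimpleGraph V} {F : Finset (V ⊕ V)}
    {g : (V ⊕ V) → Option (V ⊕ V)}
    (hg : IsPartner (whisker H) F g)
    {n ℓ q : ℕ} (hn : Fintype.card V = n) (hodd : Odd ℓ)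
    (hmin : ∀ (v : V) (w : H.Walk v v), w.IsCycle → Odd w.length → ℓ ≤ w.length)
    (hmc : mcard g = 2 * (q - 1)) (hq1 : 1 ≤ q)
    (hexp : ∃ a : V, Sum.inl a ∈ F ∧ g (Sum.inl a) = none)
    (hqr : q < (ℓ + 1) / 2 ∨ (n - ℓ / 2 < q ∧ ℓ / 2 ≤ n))
    (hocd : OCD (whisker H) F g) : False := by
  classical
  obtain ⟨c, z, hoddc, hc3, hinj, hcl, hz⟩ := hocd
  have hco : c % 2 = 1 := Nat.odd_iff.1 hoddc
  -- every cycle vertex is a left (original) vertex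
  have hnb : ∀ u y, (whisker H).Adj (Sum.inr u) y → y = Sum.inl u := by
    intro u y hy
    rcases hy with ⟨a, b, h1, h2, h3⟩ | ⟨a, ⟨h1, h2⟩ | ⟨h1, h2⟩⟩
    · exact absurd h1 (by simp)
    · exact absurd h1 (by simp)
    · rw [h2, Sum.inr.inj h1]
  have hinl : ∀ m < c, ∃ a, z m = Sum.inl a := by
    intro m hm
    cases hzm : z m with
    | inl a => exact ⟨a, rfl⟩
    | inr u =>
      exfalso
      have hsucc : z (m + 1) = Sum.inl u := by
        have ha := (hz m hm).1.1
        rw [hzm] at ha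
        exact hnb u _ ha
      rcases Nat.eq_zero_or_pos m with rfl | hm1
      · have hprev : z (c - 1) = Sum.inl u := by
          have ha := (hz (c - 1) (by omega)).1.1
          have h1 : c - 1 + 1 = c := by omega
          rw [h1, hcl, hzm] at ha
          exact hnb u _ ha.symm
        rw [← hsucc] at hprev
        have := hinj (c - 1) (by omega) 1 (by omega) hprev
        omega
      · have hprev : z (m - 1) = Sum.inl u := by
          have ha := (hz (m - 1) (by omega)).1.1
          have h1 : m - 1 + 1 = m := by omega
          rw [h1, hzm] at ha
          exact hnb u _ ha.symm
        by_cases hm2 : m + 1 < c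
        · rw [← hsucc] at hprev
          have := hinj (m - 1) (by omega) (m + 1) hm2 hprev
          omega
        · have hmc1 : m + 1 = c := by omega
          have h0 : z 0 = Sum.inl u := by
            rw [← hcl, ← hmc1]; exact hsucc
          rw [← h0] at hprev
          have := hinj (m - 1) (by omega) 0 (by omega) hprev
          omega
  set x : ℕ → V := fun m => Sum.elim id id (z m) with hxdef
  have hzx : ∀ m, m ≤ c → z m = Sum.inl (x m) := by
    intro m hm
    rcases eq_or_lt_of_le hm with rfl | hm'
    · obtain ⟨a, ha⟩ := hinl 0 (by omega)
      rw [hxdef]; dsimp only; rw [hcl, ha]; rfl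
    · obtain ⟨a, ha⟩ := hinl m hm'
      rw [hxdef]; dsimp only; rw [ha]; rfl
  have hHadj : ∀ m < c, H.Adj (x m) (x (m + 1)) := by
    intro m hm
    have ha := (hz m hm).1.1
    rw [hzx m (by omega), hzx (m + 1) (by omega)] at ha
    rcases ha with ⟨a, b, h1, h2, h3⟩ | ⟨a, ⟨h1, h2⟩ | ⟨h1, h2⟩⟩
    · obtain rfl := Sum.inl.inj h1
      obtain rfl := Sum.inl.inj h2
      exact h3
    · exact absurd h2 (by simp)
    · exact absurd h1 (by simp)
  have hxinj : ∀ i < c, ∀ j < c, x i = x j → i = j := by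
    intro i hi j hj hxx
    refine hinj i hi j hj ?_
    rw [hzx i (by omega), hzx j (by omega), hxx]
  have hxcl : x c = x 0 := by
    have h1 := hzx c (le_refl c)
    rw [hcl, hzx 0 (by omega)] at h1
    exact (Sum.inl.inj h1).symm
  obtain ⟨v0, p, hpc, hpl⟩ := cycle_of_seq H x c hc3 hHadj hxcl hxinj
  have hlc : ℓ ≤ c := by
    have h5 := hmin v0 p hpc (by rw [hpl]; exact hoddc)
    rwa [hpl] at h5
  -- counting
  set CovAh : Finset (V ⊕ V) :=
    Finset.univ.filter (fun v => (∃ a, v = Sum.inl a) ∧ (∃ b, g v = some (Sum.inl b)))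
    with hCovAh
  set CovAp : Finset (V ⊕ V) :=
    Finset.univ.filter (fun v => (∃ a, v = Sum.inl a) ∧ (∃ u, g v = some (Sum.inr u)))
    with hCovAp
  set CovY : Finset (V ⊕ V) :=
    Finset.univ.filter (fun v => (∃ u, v = Sum.inr u) ∧ (g v).isSome)
    with hCovY
  -- (ii) CovAh has at least c - 1 elements
  have hii : c - 1 ≤ CovAh.card := by
    have himg : (Finset.range (c - 1)).image (fun m => z (m + 1)) ⊆ CovAh := by
      intro v hv
      rw [mem_image] at hv
      obtain ⟨m, hm, rfl⟩ := hv
      rw [mem_range] at hm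
      rw [hCovAh, mem_filter]
      refine ⟨mem_univ _, ⟨_, hzx (m + 1) (by omega)⟩, ?_⟩
      by_cases hp : (m + 1) % 2 = 1
      · have he := (hz (m + 1) (by omega)).2.mpr (by rw [Nat.odd_iff]; exact hp)
        have hm2 : m + 1 + 1 < c := by omega
        exact ⟨x (m + 1 + 1), by rw [he, hzx (m + 1 + 1) (by omega)]⟩
      · have he := (hz m (by omega)).2.mpr (by rw [Nat.odd_iff]; omega)
        have hsym := (hg _ _ he).2
        exact ⟨x m, by rw [hsym, hzx m (by omega)]⟩
    have hcard : ((Finset.range (c - 1)).image (fun m => z (m + 1))).card = c - 1 := by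
      rw [Finset.card_image_of_injOn, card_range]
      intro i hi j hj hij
      rw [mem_coe, mem_range] at hi hj
      have := hinj (i + 1) (by omega) (j + 1) (by omega) hij
      omega
    calc c - 1 = _ := hcard.symm
    _ ≤ CovAh.card := card_le_card himg
  -- partner of a covered left vertex that is right must be its own whisker
  have hwhisk : ∀ a w, g (Sum.inl a) = some w → (∃ b, w = Sum.inl b) ∨ w = Sum.inr a := by
    intro a w hw
    have ha := (hg _ _ hw).1.1
    rcases ha with ⟨a', b, h1, h2, _⟩ | ⟨a', ⟨h1, h2⟩ | ⟨h1, h2⟩⟩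
    · exact Or.inl ⟨b, h2⟩
    · rw [h2, Sum.inl.inj h1]; exact Or.inr rfl
    · exact absurd h1 (by simp)
  -- (iii) mcard g = CovAh.card + 2 * CovY.card
  have hApY : CovAp.card = CovY.card := by
    refine Finset.card_bij' (fun v _ => Sum.swap v) (fun v _ => Sum.swap v) ?_ ?_ ?_ ?_
    · intro v hv
      rw [hCovAp, mem_filter] at hv
      obtain ⟨-, ⟨a, rfl⟩, ⟨u, hu⟩⟩ := hv
      rcases hwhisk a _ hu with ⟨b, hb⟩ | hb
      · exact absurd hb (by simp)
      · have hua : u = a := Sum.inr.inj hb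
        have hsym := (hg _ _ hu).2
        rw [hCovY, mem_filter]
        refine ⟨mem_univ _, ⟨a, rfl⟩, ?_⟩
        show (g (Sum.inr a)).isSome = true
        rw [← hua, hsym]; rfl
    · intro v hv
      rw [hCovY, mem_filter] at hv
      obtain ⟨-, ⟨u, rfl⟩, hs⟩ := hv
      obtain ⟨w, hw⟩ := Option.isSome_iff_exists.1 hs
      have hwl : w = Sum.inl u := hnb u w ((hg _ _ hw).1.1)
      rw [hCovAp, mem_filter]
      refine ⟨mem_univ _, ⟨u, rfl⟩, ⟨u, ?_⟩⟩
      show g (Sum.inl u) = some (Sum.inr u)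
      rw [hwl] at hw
      exact (hg _ _ hw).2
    · intro v _; cases v <;> rfl
    · intro v _; cases v <;> rfl
  have hiii : mcard g = CovAh.card + 2 * CovY.card := by
    have hsplit : Finset.univ.filter (fun v => (g v).isSome) = (CovAh ∪ CovAp) ∪ CovY := by
      ext v
      simp only [mem_filter, mem_univ, true_and, mem_union, hCovAh, hCovAp, hCovY]
      constructor
      · intro hv
        obtain ⟨w, hw⟩ := Option.isSome_iff_exists.1 hv
        cases v with
        | inl a =>
          rcases hwhisk a w hw with ⟨b, rfl⟩ | rfl
          · exact Or.inl (Or.inl ⟨⟨a, rfl⟩, ⟨b, hw⟩⟩)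
          · exact Or.inl (Or.inr ⟨⟨a, rfl⟩, ⟨a, hw⟩⟩)
        | inr u => exact Or.inr ⟨⟨u, rfl⟩, by rw [hw]; rfl⟩
      · intro hv
        rcases hv with (⟨-, ⟨b, hb⟩⟩ | ⟨-, ⟨u, hu⟩⟩) | ⟨-, hs⟩
        · rw [hb]; rfl
        · rw [hu]; rfl
        · exact hs
    have hd1 : Disjoint CovAh CovAp := by
      rw [Finset.disjoint_left]
      intro v h1 h2
      rw [hCovAh, mem_filter] at h1
      rw [hCovAp, mem_filter] at h2
      obtain ⟨-, -, b, hb⟩ := h1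
      obtain ⟨-, -, u, hu⟩ := h2
      rw [hb] at hu
      exact absurd (Option.some.inj hu) (by simp)
    have hd2 : Disjoint (CovAh ∪ CovAp) CovY := by
      rw [Finset.disjoint_left]
      intro v h1 h2
      rw [hCovY, mem_filter] at h2
      obtain ⟨-, ⟨u, rfl⟩, -⟩ := h2
      rw [mem_union] at h1
      rcases h1 with h1 | h1
      · rw [hCovAh, mem_filter] at h1
        obtain ⟨-, ⟨a, ha⟩, -⟩ := h1
        exact absurd ha (by simp)
      · rw [hCovAp, mem_filter] at h1
        obtain ⟨-, ⟨a, ha⟩, -⟩ := h1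
        exact absurd ha (by simp)
    rw [mcard_def, hsplit, card_union_of_disjoint hd2, card_union_of_disjoint hd1, hApY]
    omega
  -- (iv) n bounds the left part
  obtain ⟨a0, ha0F, ha0g⟩ := hexp
  have hiv : CovAh.card + CovY.card + 1 ≤ n := by
    have hsub : insert (Sum.inl a0) (CovAh ∪ CovAp) ⊆ F.filter (fun v => v.isLeft) := by
      intro v hv
      rw [mem_insert] at hv
      rcases hv with rfl | hv
      · rw [mem_filter]; exact ⟨ha0F, rfl⟩
      rw [mem_union] at hv
      rcases hv with hv | hv
      · rw [hCovAh, mem_filter] at hv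
        obtain ⟨-, ⟨a, rfl⟩, ⟨b, hb⟩⟩ := hv
        exact mem_filter.2 ⟨((hg _ _ hb).1).2.1, rfl⟩
      · rw [hCovAp, mem_filter] at hv
        obtain ⟨-, ⟨a, rfl⟩, ⟨u, hu⟩⟩ := hv
        exact mem_filter.2 ⟨((hg _ _ hu).1).2.1, rfl⟩
    have hnotin : Sum.inl a0 ∉ CovAh ∪ CovAp := by
      rw [mem_union]
      rintro (hv | hv)
      · rw [hCovAh, mem_filter] at hv
        obtain ⟨-, -, ⟨b, hb⟩⟩ := hv
        rw [ha0g] at hb; cases hb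
      · rw [hCovAp, mem_filter] at hv
        obtain ⟨-, -, ⟨u, hu⟩⟩ := hv
        rw [ha0g] at hu; cases hu
    have hd1 : Disjoint CovAh CovAp := by
      rw [Finset.disjoint_left]
      intro v h1 h2
      rw [hCovAh, mem_filter] at h1
      rw [hCovAp, mem_filter] at h2
      obtain ⟨-, -, b, hb⟩ := h1
      obtain ⟨-, -, u, hu⟩ := h2
      rw [hb] at hu
      exact absurd (Option.some.inj hu) (by simp)
    have hfin : (F.filter (fun v => v.isLeft)).card ≤ n := by
      rw [← hn, ← Finset.card_univ]
      refine Finset.card_le_card_of_injOn (fun v => Sum.elim id id v)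
        (fun a _ => Finset.mem_univ _) ?_
      · intro a ha b hb hab
        rw [mem_coe, mem_filter] at ha hb
        cases a with
        | inl a' => cases b with
          | inl b' => simp only [Sum.elim_inl, id] at hab; rw [hab]
          | inr b' => exact absurd hb.2 (by simp)
        | inr a' => exact absurd ha.2 (by simp)
    calc CovAh.card + CovY.card + 1 = (insert (Sum.inl a0) (CovAh ∪ CovAp)).card := by
          rw [card_insert_of_notMem hnotin, card_union_of_disjoint hd1, hApY]
    _ ≤ (F.filter (fun v => v.isLeft)).card := card_le_card hsub
    _ ≤ n := hfin
  rcases hodd with ⟨u, hu⟩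
  rw [hmc] at hiii
  rcases hqr with h | ⟨h1, h2⟩ <;> omega

end Contra
end MFAux


namespace MFAux
open Sum Finset

section WhiskerHelpers
variable {V : Type*} {H : SimpleGraph V}

lemma whisker_adj_inr {u : V} {y : V ⊕ V} (h : (whisker H).Adj (Sum.inr u) y) :
    y = Sum.inl u := by
  rcases h with ⟨a, b, h1, h2, h3⟩ | ⟨a, ⟨h1, h2⟩ | ⟨h1, h2⟩⟩
  · exact absurd h1 (by simp)
  · exact absurd h1 (by simp)
  · rw [h2, Sum.inr.inj h1]

lemma whisker_edge_inr {e : Sym2 (V ⊕ V)} {a : V}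
    (he : e ∈ (whisker H).edgeSet) (hm : Sum.inr a ∈ e) :
    e = s(Sum.inl a, Sum.inr a) := by
  induction e using Sym2.ind with
  | _ x y =>
    rw [SimpleGraph.mem_edgeSet] at he
    rw [Sym2.mem_iff] at hm
    rcases hm with rfl | rfl
    · rw [whisker_adj_inr he, Sym2.eq_swap]
    · rw [whisker_adj_inr he.symm]

lemma whisker_edge_inl {e : Sym2 (V ⊕ V)} (he : e ∈ (whisker H).edgeSet) :
    ∃ a, Sum.inl a ∈ e := by
  induction e using Sym2.ind with
  | _ x y =>
    rw [SimpleGraph.mem_edgeSet] at he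
    cases x with
    | inl a => exact ⟨a, by simp⟩
    | inr u => exact ⟨u, by rw [whisker_adj_inr he]; simp⟩

lemma whisker_adj_pendant (a : V) : (whisker H).Adj (Sum.inl a) (Sum.inr a) :=
  Or.inr ⟨a, Or.inl ⟨rfl, rfl⟩⟩

end WhiskerHelpers
end MFAux


open MFAux

/-- if `H` contains an odd cycle, `ℓ` is the length of a shortest odd
cycle, and `1 ≤ q < ⌈ℓ/2⌉` or `n - ⌊ℓ/2⌋ < q ≤ ν(G)`, then `MF^q(W(H))` is pure:
every facet has cardinality `n + q - 1`. -/
theorem mfComplex_pure_of_oddCycle_range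
    {V : Type*} [Fintype V] [DecidableEq V] (H : SimpleGraph V)
    (n : ℕ) (hn : Fintype.card V = n) (ℓ : ℕ) (hodd : Odd ℓ)
    (hcyc : ∃ (v : V) (w : H.Walk v v), w.IsCycle ∧ w.length = ℓ)
    (hmin : ∀ (v : V) (w : H.Walk v v), w.IsCycle → Odd w.length → ℓ ≤ w.length)
    (ν : ℕ)
    (hν₁ : ∃ M : Finset (Sym2 (V ⊕ V)),
      IsMatchingOn (whisker H) Finset.univ M ∧ M.card = ν)
    (hν₂ : ∀ M : Finset (Sym2 (V ⊕ V)),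
      IsMatchingOn (whisker H) Finset.univ M → M.card ≤ ν)
    (q : ℕ) (hq : (1 ≤ q ∧ q < (ℓ + 1) / 2) ∨ (n - ℓ / 2 < q ∧ q ≤ ν)) :
    ∀ F : Finset (V ⊕ V), IsFacet (MFFace (whisker H) q) F →
      F.card = n + q - 1 := by
  classical
  intro F hF
  obtain ⟨hface, hmax⟩ := hF
  -- basic facts about ℓ
  obtain ⟨v0, w0, hw0c, hw0l⟩ := hcyc
  have hl3 : 3 ≤ ℓ := by rw [← hw0l]; exact hw0c.three_le_length
  have hln : ℓ ≤ n := by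
    have h1 := hw0c.support_nodup
    have h2 : w0.support.tail.length = ℓ := by
      have h3 := SimpleGraph.Walk.length_support w0
      have h4 := List.length_tail (l := w0.support)
      omega
    calc ℓ = w0.support.tail.length := h2.symm
    _ ≤ Fintype.card V := h1.length_le_card
    _ = n := hn
  have hq1 : 1 ≤ q := by rcases hq with ⟨h, _⟩ | ⟨h, _⟩ <;> omega
  have hqn : q ≤ n := by
    rcases hq with ⟨_, hq2⟩ | ⟨_, hq2⟩
    · rcases hodd with ⟨u, hu⟩; omega
    · obtain ⟨Mν, hMν, hMνc⟩ := hν₁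
      obtain ⟨fν, hfν, hfνc, -⟩ := conv1 Mν hMν
      have h1 : mcard fν ≤ 2 * n := by
        rw [mcard_def]
        calc _ ≤ (Finset.univ : Finset (V ⊕ V)).card :=
              Finset.card_le_card (Finset.filter_subset _ _)
        _ = 2 * n := by rw [Finset.card_univ, Fintype.card_sum, hn]; omega
      omega
  -- A, B
  set A : Finset V := Finset.univ.filter (fun a => Sum.inl a ∈ F) with hA
  set B : Finset V := Finset.univ.filter (fun a => Sum.inr a ∈ F) with hB
  -- the pairs bound: |A ∩ B| < q
  have hPq : (A ∩ B).card < q := by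
    by_contra hge
    push_neg at hge
    obtain ⟨P', hP'sub, hP'card⟩ := Finset.exists_subset_card_eq hge
    apply hface
    refine ⟨P'.image (fun a => s(Sum.inl a, Sum.inr a)), ⟨?_, ?_, ?_⟩, ?_⟩
    · intro e he
      rw [Finset.mem_image] at he
      obtain ⟨a, _, rfl⟩ := he
      exact (SimpleGraph.mem_edgeSet _).2 (whisker_adj_pendant a)
    · intro e he v hv
      rw [Finset.mem_image] at he
      obtain ⟨a, ha, rfl⟩ := he
      have haAB := hP'sub ha
      rw [Finset.mem_inter] at haAB
      rw [Sym2.mem_iff] at hv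
      rcases hv with rfl | rfl
      · have := haAB.1; rw [hA, Finset.mem_filter] at this; exact this.2
      · have := haAB.2; rw [hB, Finset.mem_filter] at this; exact this.2
    · intro e he e' he' hne v hv hv'
      rw [Finset.mem_image] at he he'
      obtain ⟨a, ha, rfl⟩ := he
      obtain ⟨b, hb, rfl⟩ := he'
      rw [Sym2.mem_iff] at hv hv'
      have hab : a ≠ b := by
        intro h; subst h; exact hne rfl
      rcases hv with rfl | rfl <;> rcases hv' with h | h <;>
        first
          | exact hab (Sum.inl.inj h)
          | exact hab (Sum.inr.inj h)
          | exact absurd h (by simp)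
          | exact absurd h.symm (by simp)
    · rw [Finset.card_image_of_injOn, hP'card]
      intro a _ b _ hab
      rw [Sym2.eq_iff] at hab
      rcases hab with ⟨h1, -⟩ | ⟨h1, -⟩
      · exact Sum.inl.inj h1
      · exact absurd h1 (by simp)
  -- every index is covered
  have hcover : ∀ a : V, Sum.inl a ∈ F ∨ Sum.inr a ∈ F := by
    intro a
    by_contra hno
    push_neg at hno
    obtain ⟨hna, hnb⟩ := hno
    have hface' : MFFace (whisker H) q (insert (Sum.inr a) F) := by
      rintro ⟨M, hM, hMc⟩
      apply hface
      refine ⟨M, ⟨hM.1, ?_, hM.2.2⟩, hMc⟩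
      intro e he v hv
      have hvF := hM.2.1 e he v hv
      rw [Finset.mem_insert] at hvF
      rcases hvF with rfl | h
      · exfalso
        have he2 : e = s(Sum.inl a, Sum.inr a) := whisker_edge_inr (hM.1 e he) hv
        have hin := hM.2.1 e he (Sum.inl a) (by rw [he2]; simp)
        rw [Finset.mem_insert] at hin
        rcases hin with h2 | h2
        · exact absurd h2 (by simp)
        · exact hna h2
      · exact h
    have heq := hmax _ hface' (Finset.subset_insert _ _)
    exact hnb (by rw [heq]; exact Finset.mem_insert_self _ _)
  -- cardinality: |F| = |A| + |B| = n + |A ∩ B|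
  have hAimg : A.image Sum.inl = F.filter (fun v => v.isLeft) := by
    ext v
    rw [Finset.mem_image, Finset.mem_filter]
    constructor
    · rintro ⟨a, ha, rfl⟩
      rw [hA, Finset.mem_filter] at ha
      exact ⟨ha.2, rfl⟩
    · rintro ⟨hvF, hvl⟩
      cases v with
      | inl a => exact ⟨a, by rw [hA, Finset.mem_filter]; exact ⟨Finset.mem_univ _, hvF⟩, rfl⟩
      | inr a => simp at hvl
  have hBimg : B.image Sum.inr = F.filter (fun v => ¬ v.isLeft) := by
    ext v
    rw [Finset.mem_image, Finset.mem_filter]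
    constructor
    · rintro ⟨a, ha, rfl⟩
      rw [hB, Finset.mem_filter] at ha
      exact ⟨ha.2, by simp⟩
    · rintro ⟨hvF, hvl⟩
      cases v with
      | inl a => simp at hvl
      | inr a => exact ⟨a, by rw [hB, Finset.mem_filter]; exact ⟨Finset.mem_univ _, hvF⟩, rfl⟩
  have hFcard : F.card = A.card + B.card := by
    rw [← Finset.card_filter_add_card_filter_not (p := fun v : V ⊕ V => v.isLeft),
      ← hAimg, ← hBimg, Finset.card_image_of_injective _ Sum.inl_injective,
      Finset.card_image_of_injective _ Sum.inr_injective]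
  have hAB : A ∪ B = Finset.univ := by
    ext a
    simp only [Finset.mem_union, Finset.mem_univ, iff_true, hA, hB, Finset.mem_filter,
      true_and]
    exact hcover a
  have hFn : F.card = n + (A ∩ B).card := by
    have h1 := Finset.card_union_add_card_inter A B
    rw [hAB, Finset.card_univ, hn] at h1
    omega
  -- reduce to |A ∩ B| = q - 1
  suffices hPcard : (A ∩ B).card = q - 1 by
    rw [hFn, hPcard]; omega
  by_contra hPne
  have hP2 : (A ∩ B).card ≤ q - 2 := by omega
  exfalso
  by_cases hBall : B = Finset.univ
  · -- Case I : all whisker vertices present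
    have hAne : A ≠ Finset.univ := by
      intro hAall
      rw [hAall, hBall, Finset.inter_self, Finset.card_univ, hn] at hP2
      omega
    obtain ⟨j, hjA⟩ : ∃ j, j ∉ A := by
      by_contra h; push_neg at h; exact hAne (Finset.eq_univ_iff_forall.2 h)
    have hface' : MFFace (whisker H) q (insert (Sum.inl j) F) := by
      rintro ⟨M, hM, hMc⟩
      have hchoice : ∀ e : Sym2 (V ⊕ V), ∃ a, e ∈ M →
          (Sum.inl a ∈ e ∧ a ∈ insert j A) := by
        intro e
        by_cases he : e ∈ M
        · obtain ⟨a, ha⟩ := whisker_edge_inl (hM.1 e he)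
          refine ⟨a, fun _ => ⟨ha, ?_⟩⟩
          have h1 := hM.2.1 e he _ ha
          rw [Finset.mem_insert] at h1
          rcases h1 with h1 | h1
          · exact Finset.mem_insert.2 (Or.inl (Sum.inl.inj h1))
          · refine Finset.mem_insert.2 (Or.inr ?_)
            rw [hA, Finset.mem_filter]
            exact ⟨Finset.mem_univ _, h1⟩
        · exact ⟨j, fun h => absurd h he⟩
      choose pick hpick using hchoice
      have hMle : M.card ≤ (insert j A).card := by
        refine Finset.card_le_card_of_injOn pick (fun e he => (hpick e he).2) ?_
        intro e he e' he' hpp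
        rw [Finset.mem_coe] at he he'
        by_contra hne
        exact hM.2.2 e he e' he' hne _ (hpick e he).1 (hpp ▸ (hpick e' he').1)
      have hAsub : A ⊆ B := by rw [hBall]; exact Finset.subset_univ _
      have hAeq : A ∩ B = A := Finset.inter_eq_left.2 hAsub
      rw [hAeq] at hP2
      have := Finset.card_insert_le j A
      omega
    have heq := hmax _ hface' (Finset.subset_insert _ _)
    have : Sum.inl j ∈ F := by rw [heq]; exact Finset.mem_insert_self _ _
    exact hjA (by rw [hA, Finset.mem_filter]; exact ⟨Finset.mem_univ _, this⟩)
  · -- Case II : some whisker vertex missing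
    have havoid : ∀ k, k ∉ B → ∃ fk, IsPartner (whisker H) F fk ∧
        mcard fk = 2 * (q - 1) ∧ fk (Sum.inl k) = none ∧ Sum.inl k ∈ F := by
      intro k hkB
      have hkF : Sum.inl k ∈ F := by
        rcases hcover k with h | h
        · exact h
        · exact absurd (by rw [hB, Finset.mem_filter]; exact ⟨Finset.mem_univ _, h⟩) hkB
      have hkrF : Sum.inr k ∉ F := by
        intro h
        exact hkB (by rw [hB, Finset.mem_filter]; exact ⟨Finset.mem_univ _, h⟩)
      have hnotface : ¬ MFFace (whisker H) q (insert (Sum.inr k) F) := by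
        intro hf
        have heq := hmax _ hf (Finset.subset_insert _ _)
        exact hkrF (by rw [heq]; exact Finset.mem_insert_self _ _)
      rw [MFFace, not_not] at hnotface
      obtain ⟨M, hM, hMc⟩ := hnotface
      have he0 : s(Sum.inl k, Sum.inr k) ∈ M := by
        by_contra he0
        apply hface
        refine ⟨M, ⟨hM.1, ?_, hM.2.2⟩, hMc⟩
        intro e he v hv
        have hvF := hM.2.1 e he v hv
        rw [Finset.mem_insert] at hvF
        rcases hvF with rfl | h
        · exact absurd he (by rw [whisker_edge_inr (hM.1 e he) hv]; exact he0)
        · exact h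
      set M' := M.erase (s(Sum.inl k, Sum.inr k)) with hM'def
      have hM'sub : M' ⊆ M := Finset.erase_subset _ _
      have hM'avoid : ∀ e ∈ M', ∀ v ∈ e, v ≠ Sum.inl k ∧ v ≠ Sum.inr k := by
        intro e he v hv
        have hne : e ≠ s(Sum.inl k, Sum.inr k) := Finset.ne_of_mem_erase he
        constructor
        · intro h; subst h
          exact hM.2.2 _ (hM'sub he) _ he0 hne _ hv (by simp)
        · intro h; subst h
          exact hM.2.2 _ (hM'sub he) _ he0 hne _ hv (by simp)
      have hM' : IsMatchingOn (whisker H) F M' := by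
        refine ⟨fun e he => hM.1 e (hM'sub he), ?_,
          fun e he e' he' => hM.2.2 e (hM'sub he) e' (hM'sub he')⟩
        intro e he v hv
        have hvF := hM.2.1 e (hM'sub he) v hv
        rw [Finset.mem_insert] at hvF
        rcases hvF with rfl | h
        · exact absurd rfl (hM'avoid e he _ hv).2
        · exact h
      obtain ⟨fk, hfk, hfkc, hfkm⟩ := conv1 M' hM'
      refine ⟨fk, hfk, ?_, ?_, hkF⟩
      · rw [hfkc, Finset.card_erase_of_mem he0, hMc]
      · cases hfkv : fk (Sum.inl k) with
        | none => rfl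
        | some w =>
          exact absurd rfl (hM'avoid _ (hfkm _ _ hfkv) (Sum.inl k) (by simp)).1
    have hbound : ∀ g, IsPartner (whisker H) F g → mcard g ≤ 2 * (q - 1) := by
      intro g hg
      obtain ⟨Mg, hMg, hMgc⟩ := conv2 (mcard g) g hg rfl
      by_contra hgt
      push_neg at hgt
      have hq' : q ≤ Mg.card := by omega
      obtain ⟨Mq, hsub, hcard⟩ := Finset.exists_subset_card_eq hq'
      exact hface ⟨Mq, ⟨fun e he => hMg.1 e (hsub he), fun e he => hMg.2.1 e (hsub he),
        fun e he e' he' => hMg.2.2 e (hsub he) e' (hsub he')⟩, hcard⟩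
    have hqr' : q < (ℓ + 1) / 2 ∨ (n - ℓ / 2 < q ∧ ℓ / 2 ≤ n) := by
      rcases hq with ⟨-, h⟩ | ⟨h, -⟩
      · exact Or.inl h
      · exact Or.inr ⟨h, by omega⟩
    obtain ⟨k0, hk0B⟩ : ∃ k, k ∉ B := by
      by_contra h; push_neg at h; exact hBall (Finset.eq_univ_iff_forall.2 h)
    by_cases hedge : ∃ a b : V, H.Adj a b ∧ a ∈ A ∧ a ∉ B ∧ b ∈ A ∧ b ∉ B
    · obtain ⟨a, b, hab, haA, haB, hbA, hbB⟩ := hedge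
      obtain ⟨fa, hfa, hfac, hfaavoid, hfaF⟩ := havoid a haB
      obtain ⟨fb, hfb, hfbc, hfbavoid, hfbF⟩ := havoid b hbB
      have hbFm : Sum.inl b ∈ F := by
        rw [hA, Finset.mem_filter] at hbA; exact hbA.2
      have hstab := stab hfa hfb
        (by intro g hg; rw [hfbc]; exact hbound g hg) hbFm hfbavoid
      rcases hstab with ⟨w, t, hw, ht, hwt⟩ | hocd
      · have hocd : OCD (whisker H) F fa := by
          refine W1 hfa (by intro g hg; rw [hfac]; exact hbound g hg) (t + 1)
            (by rcases ht with ⟨s, hs⟩; exact ⟨s, by omega⟩)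
            (fun i => if i ≤ t then w i else Sum.inl a) ⟨?_, ?_⟩ ?_
          · dsimp only; rw [if_pos (Nat.zero_le t)]; exact hw.1
          · intro i hi
            dsimp only
            rcases lt_or_eq_of_le (by omega : i + 1 ≤ t + 1) with h | h
            · rw [if_pos (by omega : i ≤ t), if_pos (by omega : i + 1 ≤ t)]
              exact hw.2 i (by omega)
            · have hit : i = t := by omega
              subst hit
              rw [if_pos (le_refl i), if_neg (by omega)]
              rw [hwt]
              constructor
              · exact ⟨Or.inl ⟨b, a, rfl, rfl, hab.symm⟩, hbFm, hfaF⟩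
              · constructor
                · intro hcon
                  have := (hfa _ _ hcon).2
                  rw [hfaavoid] at this
                  exact absurd this (by simp)
                · intro hoddt
                  exfalso
                  rw [Nat.odd_iff] at hoddt
                  rw [Nat.even_iff] at ht
                  omega
          · skip
            rw [if_neg (by omega)]
            exact ⟨hfaF, hfaavoid⟩
        exact ocd_contra hfa hn hodd hmin hfac hq1 ⟨a, hfaF, hfaavoid⟩ hqr' hocd
      · exact ocd_contra hfb hn hodd hmin hfbc hq1 ⟨b, hfbF, hfbavoid⟩ hqr' hocd
    · -- no H-edge inside A \ B : A ∩ B covers everything, too small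
      obtain ⟨f0, hf0, hf0c, -, -⟩ := havoid k0 hk0B
      have hcov : ∀ v, (f0 v).isSome →
          (∃ a ∈ A ∩ B, v = Sum.inl a) ∨ (∃ a ∈ A ∩ B, f0 v = some (Sum.inl a)) := by
        intro v hv
        obtain ⟨u, hu⟩ := Option.isSome_iff_exists.1 hv
        have hAdj := (hf0 _ _ hu).1
        have hvF : v ∈ F := hAdj.2.1
        have huF : u ∈ F := hAdj.2.2
        rcases hAdj.1 with ⟨a', b', h1, h2, h3⟩ | ⟨a', ⟨h1, h2⟩ | ⟨h1, h2⟩⟩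
        · have ha'A : a' ∈ A := by
            rw [hA, Finset.mem_filter]; exact ⟨Finset.mem_univ _, h1 ▸ hvF⟩
          have hb'A : b' ∈ A := by
            rw [hA, Finset.mem_filter]; exact ⟨Finset.mem_univ _, h2 ▸ huF⟩
          by_cases ha'B : a' ∈ B
          · exact Or.inl ⟨a', Finset.mem_inter.2 ⟨ha'A, ha'B⟩, h1⟩
          · have hb'B : b' ∈ B := by
              by_contra hb'B
              exact hedge ⟨a', b', h3, ha'A, ha'B, hb'A, hb'B⟩
            exact Or.inr ⟨b', Finset.mem_inter.2 ⟨hb'A, hb'B⟩, by rw [hu, h2]⟩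
        · have ha'A : a' ∈ A := by
            rw [hA, Finset.mem_filter]; exact ⟨Finset.mem_univ _, h1 ▸ hvF⟩
          have ha'B : a' ∈ B := by
            rw [hB, Finset.mem_filter]; exact ⟨Finset.mem_univ _, h2 ▸ huF⟩
          exact Or.inl ⟨a', Finset.mem_inter.2 ⟨ha'A, ha'B⟩, h1⟩
        · have ha'A : a' ∈ A := by
            rw [hA, Finset.mem_filter]; exact ⟨Finset.mem_univ _, h2 ▸ huF⟩
          have ha'B : a' ∈ B := by
            rw [hB, Finset.mem_filter]; exact ⟨Finset.mem_univ _, h1 ▸ hvF⟩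
          exact Or.inr ⟨a', Finset.mem_inter.2 ⟨ha'A, ha'B⟩, by rw [hu, h2]⟩
      have hmle : mcard f0 ≤ 2 * (A ∩ B).card := by
        rw [mcard_def]
        set S1 : Finset (V ⊕ V) := (A ∩ B).image Sum.inl with hS1
        set S2 : Finset (V ⊕ V) :=
          Finset.univ.filter (fun v => ∃ a ∈ A ∩ B, f0 v = some (Sum.inl a)) with hS2
        have hsub : Finset.univ.filter (fun v => (f0 v).isSome) ⊆ S1 ∪ S2 := by
          intro v hv
          rw [Finset.mem_filter] at hv
          rcases hcov v hv.2 with ⟨a, ha, rfl⟩ | ⟨a, ha, hfa⟩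
          · exact Finset.mem_union.2 (Or.inl (Finset.mem_image.2 ⟨a, ha, rfl⟩))
          · exact Finset.mem_union.2 (Or.inr (by
              rw [hS2, Finset.mem_filter]; exact ⟨Finset.mem_univ _, a, ha, hfa⟩))
        have hS1card : S1.card = (A ∩ B).card :=
          Finset.card_image_of_injective _ Sum.inl_injective
        have hS2card : S2.card ≤ (A ∩ B).card := by
          have : S2.card ≤ S1.card := by
            refine Finset.card_le_card_of_injOn (fun v => (f0 v).getD v) ?_ ?_
            · intro v hv
              rw [Finset.mem_coe, hS2, Finset.mem_filter] at hv
              obtain ⟨-, a, ha, hfa⟩ := hv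
              dsimp only
              rw [hfa]
              exact Finset.mem_image.2 ⟨a, ha, rfl⟩
            · intro v hv v' hv' heq
              rw [Finset.mem_coe, hS2, Finset.mem_filter] at hv hv'
              obtain ⟨-, a, ha, hfa⟩ := hv
              obtain ⟨-, a', ha', hfa'⟩ := hv'
              dsimp only at heq
              rw [hfa, hfa'] at heq
              dsimp at heq
              have h1 := (hf0 _ _ hfa).2
              have h2 := (hf0 _ _ hfa').2
              rw [heq] at h1
              rw [h1] at h2
              exact Option.some.inj h2
          omega
        calc _ ≤ (S1 ∪ S2).card := Finset.card_le_card hsub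
        _ ≤ S1.card + S2.card := Finset.card_union_le _ _
        _ ≤ 2 * (A ∩ B).card := by omega
      rw [hf0c] at hmle
      omega
end

section
/- Let G = W(H) be a whisker graph with girth(H) = m, and suppose e_1,...,e_q are pairwise disjoint edges of G with 1 ≤ q < m/2 (or q ≤ ν(G) if H is acyclic). Then the independence complex of the even-connection graph G^{e_1···e_q} is vertex decomposable. -/
variable {V : Type*}

section Engine
variable {V : Type*} [DecidableEq V]

theorem isFacet_congr {p q : Finset V → Prop} (h : ∀ F, p F ↔ q F) {F : Finset V} :
    IsFacet p F ↔ IsFacet q F := by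
  unfold IsFacet
  constructor
  · rintro ⟨h1, h2⟩
    exact ⟨(h F).mp h1, fun F' hq hsub => h2 F' ((h F').mpr hq) hsub⟩
  · rintro ⟨h1, h2⟩
    exact ⟨(h F).mpr h1, fun F' hp hsub => h2 F' ((h F').mp hp) hsub⟩

theorem vd_congr {p : Finset V → Prop} (hp : VertexDecomposable p) :
    ∀ {q : Finset V → Prop}, (∀ F, p F ↔ q F) → VertexDecomposable q := by
  induction hp with
  | simplex faces F hF =>
    intro q h
    exact .simplex q F (fun F' => (h F').symm.trans (hF F'))
  | shed faces v hdel hlink hshed ih1 ih2 =>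
    intro q h
    refine .shed q v (ih1 fun F => and_congr_left' (h F))
      (ih2 fun F => and_congr_right' (h (insert v F))) ?_
    intro F hvF hqF hfacet
    refine hshed F hvF ((h _).mpr hqF) ?_
    exact (isFacet_congr (fun F' => and_congr_left' (h F'))).mpr hfacet

/-- The link vertex set: members of `T` distinct from and non-adjacent to `u`. -/
noncomputable def linkSet (Γ : SimpleGraph V) (T : Finset V) (u : V) : Finset V :=
  @Finset.filter _ (fun z => ¬ Γ.Adj u z ∧ z ≠ u) (Classical.decPred _) T

theorem mem_linkSet {Γ : SimpleGraph V} {T : Finset V} {u z : V} :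
    z ∈ linkSet Γ T u ↔ z ∈ T ∧ ¬ Γ.Adj u z ∧ z ≠ u := by
  simp [linkSet, Finset.mem_filter]

theorem engine (Γ : SimpleGraph V) (Good : Finset V → Prop)
    (hstep : ∀ T, Good T → (∃ a ∈ T, ∃ b ∈ T, Γ.Adj a b) →
      ∃ u, u ∈ T ∧ ∃ w, w ∈ T ∧ Γ.Adj u w ∧
        (∀ z ∈ T, Γ.Adj z w → z = u ∨ Γ.Adj z u) ∧
        Good (T.erase u) ∧ Good (linkSet Γ T u)) :
    ∀ T : Finset V, Good T →
      VertexDecomposable (fun F => F ⊆ T ∧ ∀ a ∈ F, ∀ b ∈ F, ¬ Γ.Adj a b) := by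
  intro T
  induction T using Finset.strongInductionOn with
  | _ T ih =>
  intro hGood
  by_cases hE : ∃ a ∈ T, ∃ b ∈ T, Γ.Adj a b
  · obtain ⟨u, huT, w, hwT, huw, hdom, hGdel, hGlink⟩ := hstep T hGood hE
    have hlink_sub : linkSet Γ T u ⊆ T := fun z hz => (mem_linkSet.mp hz).1
    have hu_not_link : u ∉ linkSet Γ T u := by
      intro hu; exact (mem_linkSet.mp hu).2.2 rfl
    refine .shed _ u ?_ ?_ ?_
    · -- deletion
      have h1 := ih (T.erase u) (Finset.erase_ssubset huT) hGdel
      refine vd_congr h1 ?_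
      intro F
      constructor
      · rintro ⟨hsub, hind⟩
        have := Finset.subset_erase.mp hsub
        exact ⟨⟨this.1, hind⟩, this.2⟩
      · rintro ⟨⟨hsub, hind⟩, hu⟩
        exact ⟨Finset.subset_erase.mpr ⟨hsub, hu⟩, hind⟩
    · -- link
      have hss : linkSet Γ T u ⊂ T :=
        Finset.ssubset_iff_of_subset hlink_sub |>.mpr ⟨u, huT, hu_not_link⟩
      have h1 := ih _ hss hGlink
      refine vd_congr h1 ?_
      intro F
      constructor
      · rintro ⟨hsub, hind⟩
        have huF : u ∉ F := fun hu => hu_not_link (hsub hu)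
        refine ⟨huF, Finset.insert_subset huT (fun z hz => hlink_sub (hsub hz)), ?_⟩
        intro a ha b hb
        rcases Finset.mem_insert.mp ha with rfl | haF
        · rcases Finset.mem_insert.mp hb with rfl | hbF
          · exact Γ.loopless.irrefl _
          · exact (mem_linkSet.mp (hsub hbF)).2.1
        · rcases Finset.mem_insert.mp hb with rfl | hbF
          · exact fun h => (mem_linkSet.mp (hsub haF)).2.1 h.symm
          · exact hind a haF b hbF
      · rintro ⟨huF, hsub, hind⟩
        constructor
        · intro z hz
          refine mem_linkSet.mpr ⟨hsub (Finset.mem_insert_of_mem hz), ?_, ?_⟩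
          · exact hind u (Finset.mem_insert_self u F) z (Finset.mem_insert_of_mem hz)
          · rintro rfl; exact huF hz
        · intro a ha b hb
          exact hind a (Finset.mem_insert_of_mem ha) b (Finset.mem_insert_of_mem hb)
    · -- shedding condition
      intro F huF hins hfacet
      obtain ⟨⟨⟨hFsub, hFind⟩, _⟩, hmax⟩ := hfacet
      have hwF : w ∉ F := by
        intro hw
        exact hins.2 u (Finset.mem_insert_self u F) w (Finset.mem_insert_of_mem hw) huw
      have hne : u ≠ w := huw.ne
      have hfaces : (insert w F ⊆ T ∧ ∀ a ∈ insert w F, ∀ b ∈ insert w F,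
          ¬ Γ.Adj a b) ∧ u ∉ insert w F := by
        refine ⟨⟨Finset.insert_subset hwT hFsub, ?_⟩, ?_⟩
        · intro a ha b hb
          rcases Finset.mem_insert.mp ha with rfl | haF
          · rcases Finset.mem_insert.mp hb with rfl | hbF
            · exact Γ.loopless.irrefl _
            · intro hab
              rcases hdom b (hFsub hbF) hab.symm with rfl | hb2
              · exact huF hbF
              · exact hins.2 u (Finset.mem_insert_self u F) b
                  (Finset.mem_insert_of_mem hbF) hb2.symm
          · rcases Finset.mem_insert.mp hb with rfl | hbF
            · intro hab
              rcases hdom a (hFsub haF) hab with rfl | ha2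
              · exact huF haF
              · exact hins.2 u (Finset.mem_insert_self u F) a
                  (Finset.mem_insert_of_mem haF) ha2.symm
            · exact hFind a haF b hbF
        · intro hu
          rcases Finset.mem_insert.mp hu with h | h
          · exact hne h
          · exact huF h
      have := hmax (insert w F) hfaces (Finset.subset_insert w F)
      exact hwF (this ▸ Finset.mem_insert_self w F)
  · exact .simplex _ T (fun F' => ⟨fun h => h.1,
      fun h => ⟨h, fun a ha b hb hab => hE ⟨a, h ha, b, h hb, hab⟩⟩⟩)

end Engine

section Chains
open Sum

variable {V : Type*} [Fintype V] {H : SimpleGraph V} {M : Finset (Sym2 (V ⊕ V))}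

theorem whisker_adj_inl_inl {a b : V} :
    (whisker H).Adj (Sum.inl a) (Sum.inl b) ↔ H.Adj a b := by
  constructor
  · rintro (⟨a', b', ha, hb, hab⟩ | ⟨a', ⟨h1, h2⟩ | ⟨h1, h2⟩⟩)
    · obtain rfl := Sum.inl_injective ha
      obtain rfl := Sum.inl_injective hb
      exact hab
    · exact absurd h2 (by simp)
    · exact absurd h1 (by simp)
  · intro h
    exact Or.inl ⟨a, b, rfl, rfl, h⟩

theorem whisker_adj_to_inr {x : V ⊕ V} {t : V} :
    (whisker H).Adj x (Sum.inr t) ↔ x = Sum.inl t := by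
  constructor
  · rintro (⟨a', b', ha, hb, hab⟩ | ⟨a', ⟨h1, h2⟩ | ⟨h1, h2⟩⟩)
    · exact absurd hb (by simp)
    · obtain rfl := Sum.inr_injective h2
      exact h1
    · exact absurd h2 (by simp)
  · rintro rfl
    exact Or.inr ⟨t, Or.inl ⟨rfl, rfl⟩⟩

theorem whisker_adj_from_inr {x : V ⊕ V} {t : V} :
    (whisker H).Adj (Sum.inr t) x ↔ x = Sum.inl t := by
  constructor
  · intro h
    exact whisker_adj_to_inr.mp h.symm
  · rintro rfl
    exact (whisker_adj_to_inr.mpr rfl).symm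

theorem mem_mSupp' {v : V ⊕ V} : v ∈ mSupp M ↔ ∃ e ∈ M, v ∈ e := Iff.rfl

theorem mem_mSupp_of {e : Sym2 (V ⊕ V)} (he : e ∈ M) {v : V ⊕ V} (hv : v ∈ e) :
    v ∈ mSupp M := ⟨e, he, hv⟩

section WithMatching

variable (hM : IsMatchingOn (whisker H) Finset.univ M)
include hM

theorem medge_unique {e e' : Sym2 (V ⊕ V)} (he : e ∈ M) (he' : e' ∈ M) {v : V ⊕ V}
    (hv : v ∈ e) (hv' : v ∈ e') : e = e' := by
  by_contra h
  exact hM.2.2 e he e' he' h v hv hv'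

theorem medge_not_diag {x : V ⊕ V} : s(x, x) ∉ M := by
  intro h
  exact (whisker H).loopless.irrefl x (hM.1 _ h)

theorem medge_inr {e : Sym2 (V ⊕ V)} (he : e ∈ M) {t : V} (ht : Sum.inr t ∈ e) :
    e = s(Sum.inl t, Sum.inr t) := by
  induction e with
  | _ x y =>
    have hadj : (whisker H).Adj x y := hM.1 _ he
    rcases Sym2.mem_iff.mp ht with rfl | rfl
    · have := whisker_adj_from_inr.mp hadj
      rw [this, Sym2.eq_swap]
    · have := whisker_adj_to_inr.mp hadj
      rw [this]

theorem inl_mem_of_inr_mem {a : V} (h : Sum.inr a ∈ mSupp M) : Sum.inl a ∈ mSupp M := by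
  obtain ⟨e, he, hv⟩ := h
  have := medge_inr hM he hv
  subst this
  exact mem_mSupp_of he (Sym2.mem_mk_left _ _)

theorem mate_unique {a b b' : V} (h : s(Sum.inl a, Sum.inl b) ∈ M)
    (h' : s(Sum.inl a, Sum.inl b') ∈ M) : b = b' := by
  have := medge_unique hM h h' (Sym2.mem_mk_left _ _) (Sym2.mem_mk_left _ _)
  rcases Sym2.eq_iff.mp this with ⟨_, h2⟩ | ⟨h1, h2⟩
  · exact Sum.inl_injective h2
  · exact (Sum.inl_injective h2).trans (Sum.inl_injective h1)

theorem inr_not_supp_of_medge {a b : V} (h : s(Sum.inl a, Sum.inl b) ∈ M) :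
    Sum.inr a ∉ mSupp M := by
  intro ⟨e, he, hv⟩
  have he2 := medge_inr hM he hv
  subst he2
  have := medge_unique hM h he (Sym2.mem_mk_left _ _) (Sym2.mem_mk_left _ _)
  rw [Sym2.eq_iff] at this
  simp at this

end WithMatching

/-- An alternating chain in `H` whose odd edges (positions `(2k, 2k+1)`) are
(`inl`-images of) pairwise distinct edges of `M`, connected by edges of `H`. -/
def AltChain (H : SimpleGraph V) (M : Finset (Sym2 (V ⊕ V))) (r : ℕ) (c : ℕ → V) : Prop :=
  1 ≤ r ∧
  (∀ k, k < r → s(Sum.inl (c (2 * k)), Sum.inl (c (2 * k + 1))) ∈ M) ∧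
  (∀ k, k + 1 < r → H.Adj (c (2 * k + 1)) (c (2 * k + 2))) ∧
  (∀ k l, k < r → l < r →
    s((Sum.inl (c (2 * k)) : V ⊕ V), Sum.inl (c (2 * k + 1))) =
      s((Sum.inl (c (2 * l)) : V ⊕ V), Sum.inl (c (2 * l + 1))) → k = l)

/-- Ends of alternating chains. -/
def CE (H : SimpleGraph V) (M : Finset (Sym2 (V ⊕ V))) (a b : V) : Prop :=
  ∃ r c, AltChain H M r c ∧ c 0 = a ∧ c (2 * r - 1) = b

theorem altChain_mem_edge {r : ℕ} {c : ℕ → V} (hc : AltChain H M r c) {i : ℕ}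
    (hi : i < 2 * r) :
    (Sum.inl (c i) : V ⊕ V) ∈
      s((Sum.inl (c (2 * (i / 2))) : V ⊕ V), Sum.inl (c (2 * (i / 2) + 1))) := by
  rcases Nat.even_or_odd i with ⟨k, hk⟩ | ⟨k, hk⟩
  · have h1 : i / 2 = k := by omega
    have h2 : 2 * (i / 2) = i := by omega
    rw [h2]
    exact Sym2.mem_mk_left _ _
  · have h2 : 2 * (i / 2) + 1 = i := by omega
    rw [h2]
    exact Sym2.mem_mk_right _ _

theorem altChain_nodup (hM : IsMatchingOn (whisker H) Finset.univ M) {r : ℕ} {c : ℕ → V}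
    (hc : AltChain H M r c) {i j : ℕ} (hi : i < 2 * r) (hj : j < 2 * r) (hij : i ≠ j) :
    c i ≠ c j := by
  intro hcij
  have hdi : i / 2 < r := by omega
  have hdj : j / 2 < r := by omega
  have hmi := altChain_mem_edge hc hi
  have hmj := altChain_mem_edge hc hj
  by_cases hd : i / 2 = j / 2
  · -- same edge, opposite ends
    have : (i = 2 * (i / 2) ∧ j = 2 * (i / 2) + 1) ∨
        (j = 2 * (i / 2) ∧ i = 2 * (i / 2) + 1) := by omega
    have hedge := hc.2.1 (i / 2) hdi
    rcases this with ⟨h1, h2⟩ | ⟨h1, h2⟩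
    · rw [← h2, ← h1, ← hcij] at hedge
      exact medge_not_diag hM hedge
    · rw [← h2, ← h1, hcij] at hedge
      exact medge_not_diag hM hedge
  · -- distinct edges, disjoint by matching
    have hne : s((Sum.inl (c (2 * (i / 2))) : V ⊕ V), Sum.inl (c (2 * (i / 2) + 1))) ≠
        s((Sum.inl (c (2 * (j / 2))) : V ⊕ V), Sum.inl (c (2 * (j / 2) + 1))) := by
      intro h
      exact hd (hc.2.2.2 _ _ hdi hdj h)
    have := hM.2.2 _ (hc.2.1 _ hdi) _ (hc.2.1 _ hdj) hne _ hmi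
    rw [hcij] at this
    exact this hmj

theorem altChain_reverse {r : ℕ} {c : ℕ → V} (hc : AltChain H M r c) :
    AltChain H M r (fun i => c (2 * r - 1 - i)) := by
  obtain ⟨hr, hmem, hadj, hinj⟩ := hc
  refine ⟨hr, ?_, ?_, ?_⟩
  · intro k hk
    have e1 : 2 * r - 1 - 2 * k = 2 * (r - 1 - k) + 1 := by omega
    have e2 : 2 * r - 1 - (2 * k + 1) = 2 * (r - 1 - k) := by omega
    simp only [e1, e2]
    rw [Sym2.eq_swap]
    exact hmem _ (by omega)
  · intro k hk
    have e1 : 2 * r - 1 - (2 * k + 1) = 2 * (r - 2 - k) + 2 := by omega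
    have e2 : 2 * r - 1 - (2 * k + 2) = 2 * (r - 2 - k) + 1 := by omega
    simp only [e1, e2]
    exact (hadj _ (by omega)).symm
  · intro k l hk hl h
    have e1 : 2 * r - 1 - 2 * k = 2 * (r - 1 - k) + 1 := by omega
    have e2 : 2 * r - 1 - (2 * k + 1) = 2 * (r - 1 - k) := by omega
    have e3 : 2 * r - 1 - 2 * l = 2 * (r - 1 - l) + 1 := by omega
    have e4 : 2 * r - 1 - (2 * l + 1) = 2 * (r - 1 - l) := by omega
    simp only [e1, e2, e3, e4] at h
    rw [Sym2.eq_swap, show s(Sum.inl (c (2 * (r - 1 - l) + 1)), Sum.inl (c (2 * (r-1-l)))) =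
      s(Sum.inl (c (2 * (r - 1 - l))), Sum.inl (c (2 * (r-1-l) + 1))) from Sym2.eq_swap] at h
    have := hinj _ _ (by omega) (by omega) h
    omega

theorem CE_symm {a b : V} (h : CE H M a b) : CE H M b a := by
  obtain ⟨r, c, hc, h0, h1⟩ := h
  refine ⟨r, fun i => c (2 * r - 1 - i), altChain_reverse hc, by simpa using h1, ?_⟩
  simpa [show 2 * r - 1 - (2 * r - 1) = 0 by omega] using h0

theorem CE_ne (hM : IsMatchingOn (whisker H) Finset.univ M) {a b : V} (h : CE H M a b) :
    a ≠ b := by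
  obtain ⟨r, c, hc, h0, h1⟩ := h
  have hr := hc.1
  subst h0; subst h1
  exact altChain_nodup hM hc (by omega) (by omega) (by omega)

theorem altChain_r_le {r : ℕ} {c : ℕ → V} (hc : AltChain H M r c) : r ≤ M.card := by
  classical
  have : (Finset.range r).card ≤ M.card := by
    apply Finset.card_le_card_of_injOn
      (fun k => s(Sum.inl (c (2 * k)), Sum.inl (c (2 * k + 1))))
    · intro k hk
      exact hc.2.1 k (Finset.mem_range.mp hk)
    · intro k hk l hl h
      exact hc.2.2.2 k l (Finset.mem_range.mp hk) (Finset.mem_range.mp hl) h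
  simpa using this

theorem CE_of_medge {a b : V} (h : s(Sum.inl a, Sum.inl b) ∈ M) : CE H M a b := by
  refine ⟨1, fun i => if i = 0 then a else b, ⟨le_refl 1, ?_, ?_, ?_⟩, by simp, by simp⟩
  · intro k hk
    interval_cases k
    simpa using h
  · intro k hk; omega
  · intro k l hk hl _; omega

theorem chain_first (hM : IsMatchingOn (whisker H) Finset.univ M) {r : ℕ} {c : ℕ → V}
    (hc : AltChain H M r c) {b : V} (hb : s(Sum.inl (c 0), Sum.inl b) ∈ M) : c 1 = b := by
  have h0 := hc.2.1 0 hc.1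
  simp only [Nat.mul_zero, Nat.zero_add] at h0
  exact (mate_unique hM h0 hb).symm ▸ rfl

end Chains

section Decode
open Sum

variable {V : Type*} [Fintype V] {H : SimpleGraph V} {M : Finset (Sym2 (V ⊕ V))}
variable (hM : IsMatchingOn (whisker H) Finset.univ M)
include hM

theorem ec_decode {u v : V ⊕ V} (hu : u ∉ mSupp M) (hv : v ∉ mSupp M)
    (h : EvenConnected (whisker H) M u v) :
    ∃ r c, AltChain H M r c ∧ (whisker H).Adj u (Sum.inl (c 0)) ∧
      (whisker H).Adj (Sum.inl (c (2 * r - 1))) v := by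
  obtain ⟨r, p, hr, hp0, hpe, hadj, hmem, hinj⟩ := h
  have hinl : ∀ j, 1 ≤ j → j ≤ 2 * r → ∃ x, p j = Sum.inl x := by
    intro j hj1 hj2
    rcases hpj : p j with x | t
    · exact ⟨x, rfl⟩
    exfalso
    rcases Nat.even_or_odd j with ⟨k, hk⟩ | ⟨k, hk⟩
    · -- even position : j = 2*k1 + 2
      have hk1r : k - 1 < r := by omega
      set k1 := k - 1 with hk1
      have hedge := hmem k1 hk1r
      have hpj' : p (2 * k1 + 2) = Sum.inr t := by
        rw [show 2 * k1 + 2 = j by omega]; exact hpj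
      have hmemt : (Sum.inr t : V ⊕ V) ∈ s(p (2 * k1 + 1), p (2 * k1 + 2)) := by
        rw [hpj']; exact Sym2.mem_mk_right _ _
      have he2 := medge_inr hM hedge hmemt
      have hadj2 : (whisker H).Adj (Sum.inr t) (p (2 * k1 + 3)) := by
        have h3 := hadj (2 * k1 + 2) (by omega)
        rw [hpj'] at h3
        rwa [show 2 * k1 + 2 + 1 = 2 * k1 + 3 by omega] at h3
      have hp3 := whisker_adj_from_inr.mp hadj2
      by_cases hkr : k1 + 1 < r
      · have hedge2 := hmem (k1 + 1) hkr
        have hm1 : (Sum.inl t : V ⊕ V) ∈ s(p (2 * k1 + 1), p (2 * k1 + 2)) := by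
          rw [he2]; exact Sym2.mem_mk_left _ _
        have hm2 : (Sum.inl t : V ⊕ V) ∈ s(p (2 * (k1 + 1) + 1), p (2 * (k1 + 1) + 2)) := by
          rw [show 2 * (k1 + 1) + 1 = 2 * k1 + 3 by omega, hp3]
          exact Sym2.mem_mk_left _ _
        have heq := medge_unique hM hedge hedge2 hm1 hm2
        have := hinj k1 (k1 + 1) hk1r hkr heq
        omega
      · have hj2 : 2 * k1 + 3 = 2 * r + 1 := by omega
        rw [hj2, hpe] at hp3
        apply hv
        refine mem_mSupp_of hedge ?_
        rw [he2, hp3]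
        exact Sym2.mem_mk_left _ _
    · -- odd position : j = 2*k + 1
      have hkr : k < r := by omega
      have hedge := hmem k hkr
      have hpj' : p (2 * k + 1) = Sum.inr t := by
        rw [show 2 * k + 1 = j by omega]; exact hpj
      have hmemt : (Sum.inr t : V ⊕ V) ∈ s(p (2 * k + 1), p (2 * k + 2)) := by
        rw [hpj']; exact Sym2.mem_mk_left _ _
      have he2 := medge_inr hM hedge hmemt
      have hp2 : p (2 * k + 2) = Sum.inl t := by
        rcases Sym2.eq_iff.mp he2 with ⟨ha, _⟩ | ⟨_, hb⟩
        · rw [hpj'] at ha; exact absurd ha (by simp)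
        · exact hb
      have hadj0 : (whisker H).Adj (p (2 * k)) (Sum.inr t) := by
        have h3 := hadj (2 * k) (by omega)
        rwa [hpj'] at h3
      have hp2k := whisker_adj_to_inr.mp hadj0
      by_cases hk0 : k = 0
      · subst hk0
        apply hu
        rw [show (2 : ℕ) * 0 = 0 by omega, hp0] at hp2k
        refine mem_mSupp_of hedge ?_
        rw [he2, ← hp2k]
        exact Sym2.mem_mk_left _ _
      · have hedge' := hmem (k - 1) (by omega)
        have hm1 : (Sum.inl t : V ⊕ V) ∈ s(p (2 * (k - 1) + 1), p (2 * (k - 1) + 2)) := by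
          rw [show 2 * (k - 1) + 2 = 2 * k by omega, hp2k]
          exact Sym2.mem_mk_right _ _
        have hm2 : (Sum.inl t : V ⊕ V) ∈ s(p (2 * k + 1), p (2 * k + 2)) := by
          rw [he2]; exact Sym2.mem_mk_left _ _
        have heq := medge_unique hM hedge' hedge hm1 hm2
        have := hinj (k - 1) k (by omega) hkr heq
        omega
  -- extract the chain
  have hpc : ∀ i, i < 2 * r → p (i + 1) = Sum.inl (Sum.elim id id (p (i + 1)) : V) := by
    intro i hi
    obtain ⟨x, hx⟩ := hinl (i + 1) (by omega) (by omega)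
    rw [hx]; rfl
  refine ⟨r, fun i => Sum.elim id id (p (i + 1)), ⟨hr, ?_, ?_, ?_⟩, ?_, ?_⟩
  · intro k hk
    have e1 := hpc (2 * k) (by omega)
    have e2 := hpc (2 * k + 1) (by omega)
    rw [show 2 * k + 1 + 1 = 2 * k + 2 by omega] at e2
    rw [← e1, ← e2]
    exact hmem k hk
  · intro k hk
    have e1 := hpc (2 * k + 1) (by omega)
    rw [show 2 * k + 1 + 1 = 2 * k + 2 by omega] at e1
    have e2 := hpc (2 * k + 2) (by omega)
    rw [show 2 * k + 2 + 1 = 2 * k + 3 by omega] at e2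
    have h3 := hadj (2 * k + 2) (by omega)
    rw [show 2 * k + 2 + 1 = 2 * k + 3 by omega] at h3
    rw [e1, e2] at h3
    exact whisker_adj_inl_inl.mp h3
  · intro k l hk hl heq
    have e1 := hpc (2 * k) (by omega)
    have e2 := hpc (2 * k + 1) (by omega)
    rw [show 2 * k + 1 + 1 = 2 * k + 2 by omega] at e2
    have e3 := hpc (2 * l) (by omega)
    have e4 := hpc (2 * l + 1) (by omega)
    rw [show 2 * l + 1 + 1 = 2 * l + 2 by omega] at e4
    rw [← e1, ← e2, ← e3, ← e4] at heq
    exact hinj k l hk hl heq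
  · have h3 := hadj 0 (by omega)
    rw [hp0] at h3
    rwa [← hpc 0 (by omega)]
  · have h3 := hadj (2 * r) (by omega)
    rw [hpe] at h3
    have e1 := hpc (2 * r - 1) (by omega)
    show (whisker H).Adj (Sum.inl (Sum.elim id id (p (2 * r - 1 + 1)))) v
    rw [← e1]
    rwa [show 2 * r - 1 + 1 = 2 * r by omega]

omit hM in
theorem ec_encode (hM : IsMatchingOn (whisker H) Finset.univ M) {r : ℕ} {c : ℕ → V}
    (hc : AltChain H M r c) {u v : V ⊕ V}
    (h1 : (whisker H).Adj u (Sum.inl (c 0)))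
    (h2 : (whisker H).Adj (Sum.inl (c (2 * r - 1))) v) :
    EvenConnected (whisker H) M u v := by
  classical
  obtain ⟨hr, hmem, hadjc, hinj⟩ := hc
  set p : ℕ → V ⊕ V := fun j => if j = 0 then u else if j ≤ 2 * r then Sum.inl (c (j - 1)) else v
    with hp
  have hp0 : p 0 = u := by simp [hp]
  have hpi : ∀ j, 1 ≤ j → j ≤ 2 * r → p j = Sum.inl (c (j - 1)) := by
    intro j hj1 hj2
    simp only [hp]
    rw [if_neg (by omega), if_pos hj2]
  have hpe : p (2 * r + 1) = v := by
    simp only [hp]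
    rw [if_neg (by omega), if_neg (by omega)]
  refine ⟨r, p, hr, hp0, hpe, ?_, ?_, ?_⟩
  · intro k hk
    rcases Nat.eq_or_lt_of_le hk with hk2r | hklt
    · -- k = 2r
      rw [show k = 2 * r by omega, hpe, hpi (2 * r) (by omega) (by omega)]
      exact h2
    · by_cases hk0 : k = 0
      · subst hk0
        rw [hp0, hpi 1 (by omega) (by omega)]
        exact h1
      · have ek := hpi k (by omega) (by omega)
        have ek1 := hpi (k + 1) (by omega) (by omega)
        rw [ek, ek1]
        rcases Nat.even_or_odd k with ⟨k', hk'⟩ | ⟨k', hk'⟩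
        · -- k = 2k' even, k ≥ 2 : H-edge
          have hidx1 : k - 1 = 2 * (k' - 1) + 1 := by omega
          have hidx2 : k + 1 - 1 = 2 * (k' - 1) + 2 := by omega
          rw [hidx1, hidx2]
          exact whisker_adj_inl_inl.mpr (hadjc (k' - 1) (by omega))
        · -- k = 2k'+1 odd : M-edge
          have hidx1 : k - 1 = 2 * k' := by omega
          have hidx2 : k + 1 - 1 = 2 * k' + 1 := by omega
          rw [hidx1, hidx2]
          exact (SimpleGraph.mem_edgeSet _).mp (hM.1 _ (hmem k' (by omega)))
  · intro k hk
    rw [hpi (2 * k + 1) (by omega) (by omega), hpi (2 * k + 2) (by omega) (by omega)]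
    rw [show 2 * k + 1 - 1 = 2 * k by omega, show 2 * k + 2 - 1 = 2 * k + 1 by omega]
    exact hmem k hk
  · intro k l hk hl heq
    rw [hpi (2 * k + 1) (by omega) (by omega), hpi (2 * k + 2) (by omega) (by omega),
      hpi (2 * l + 1) (by omega) (by omega), hpi (2 * l + 2) (by omega) (by omega),
      show 2 * k + 1 - 1 = 2 * k by omega, show 2 * k + 2 - 1 = 2 * k + 1 by omega,
      show 2 * l + 1 - 1 = 2 * l by omega, show 2 * l + 2 - 1 = 2 * l + 1 by omega] at heq
    exact hinj k l hk hl heq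

end Decode

section AdjCor
open Sum

variable {V : Type*} [Fintype V] {H : SimpleGraph V} {M : Finset (Sym2 (V ⊕ V))}
variable (hM : IsMatchingOn (whisker H) Finset.univ M)
include hM

/-- Whenever `x_a ∉ supp M`, the only neighbour of the whisker `y_a` is `x_a`. -/
theorem adj_pendant {a : V} (ha : Sum.inl a ∉ mSupp M) {z : V ⊕ V}
    (h : (evenConnGraph (whisker H) M).Adj z (Sum.inr a)) : z = Sum.inl a := by
  obtain ⟨hne, hz, hy, hcase⟩ := h
  rcases hcase with hG | hec | hec
  · exact whisker_adj_to_inr.mp hG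
  · obtain ⟨r, c, hc, h1, h2⟩ := ec_decode hM hz hy hec
    exfalso
    have := whisker_adj_to_inr.mp h2
    apply ha
    refine mem_mSupp_of (hc.2.1 (r - 1) (by have := hc.1; omega)) ?_
    rw [show 2 * (r - 1) + 1 = 2 * r - 1 by have := hc.1; omega, ← Sum.inl_injective this]
    exact Sym2.mem_mk_right _ _
  · obtain ⟨r, c, hc, h1, h2⟩ := ec_decode hM hy hz hec
    exfalso
    have := whisker_adj_from_inr.mp h1
    apply ha
    refine mem_mSupp_of (hc.2.1 0 hc.1) ?_
    rw [show 2 * 0 = 0 by omega, ← Sum.inl_injective this]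
    exact Sym2.mem_mk_left _ _

theorem adj_inr_inr_decode {a b : V}
    (h : (evenConnGraph (whisker H) M).Adj (Sum.inr a) (Sum.inr b)) :
    Sum.inl a ∈ mSupp M ∧ Sum.inl b ∈ mSupp M ∧ CE H M a b := by
  obtain ⟨hne, hz, hy, hcase⟩ := h
  have key : ∀ x y : V, (evenConnGraph (whisker H) M).Adj (Sum.inr x) (Sum.inr y) →
      EvenConnected (whisker H) M (Sum.inr x) (Sum.inr y) →
      Sum.inl x ∈ mSupp M ∧ Sum.inl y ∈ mSupp M ∧ CE H M x y := by
    intro x y hadj hec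
    obtain ⟨_, hx', hy', _⟩ := hadj
    obtain ⟨r, c, hc, h1, h2⟩ := ec_decode hM hx' hy' hec
    have e1 : c 0 = x := Sum.inl_injective (whisker_adj_from_inr.mp h1)
    have e2 : c (2 * r - 1) = y := Sum.inl_injective (whisker_adj_to_inr.mp h2)
    refine ⟨?_, ?_, r, c, hc, e1, e2⟩
    · refine mem_mSupp_of (hc.2.1 0 hc.1) ?_
      rw [show 2 * 0 = 0 by omega, e1]
      exact Sym2.mem_mk_left _ _
    · refine mem_mSupp_of (hc.2.1 (r - 1) (by have := hc.1; omega)) ?_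
      rw [show 2 * (r - 1) + 1 = 2 * r - 1 by have := hc.1; omega, e2]
      exact Sym2.mem_mk_right _ _
  rcases hcase with hG | hec | hec
  · exact absurd (whisker_adj_to_inr.mp hG) (by simp)
  · exact key a b ⟨hne, hz, hy, Or.inr (Or.inl hec)⟩ hec
  · obtain ⟨m1, m2, m3⟩ := key b a ⟨hne.symm, hy, hz, Or.inr (Or.inl hec)⟩ hec
    exact ⟨m2, m1, CE_symm m3⟩

theorem adj_of_CE {a b : V} (hce : CE H M a b) (ha : Sum.inr a ∉ mSupp M)
    (hb : Sum.inr b ∉ mSupp M) :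
    (evenConnGraph (whisker H) M).Adj (Sum.inr a) (Sum.inr b) := by
  obtain ⟨r, c, hc, h0, h1⟩ := hce
  refine ⟨?_, ha, hb, Or.inr (Or.inl (ec_encode hM hc ?_ ?_))⟩
  · intro h
    exact CE_ne hM ⟨r, c, hc, h0, h1⟩ (Sum.inr_injective h)
  · rw [h0]; exact whisker_adj_from_inr.mpr rfl
  · rw [h1]; exact whisker_adj_to_inr.mpr rfl

theorem adj_inr_inl_decode {a d : V} (hsup : Sum.inl a ∈ mSupp M)
    (h : (evenConnGraph (whisker H) M).Adj (Sum.inr a) (Sum.inl d)) :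
    ∃ g, CE H M a g ∧ H.Adj g d := by
  obtain ⟨hne, hz, hy, hcase⟩ := h
  rcases hcase with hG | hec | hec
  · have := whisker_adj_from_inr.mp hG
    rw [Sum.inl_injective this] at hy
    exact absurd hsup hy
  · obtain ⟨r, c, hc, h1, h2⟩ := ec_decode hM hz hy hec
    have e1 : c 0 = a := Sum.inl_injective (whisker_adj_from_inr.mp h1)
    exact ⟨c (2 * r - 1), ⟨r, c, hc, e1, rfl⟩, whisker_adj_inl_inl.mp h2⟩
  · obtain ⟨r, c, hc, h1, h2⟩ := ec_decode hM hy hz hec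
    have e2 : c (2 * r - 1) = a := Sum.inl_injective (whisker_adj_to_inr.mp h2)
    refine ⟨c 0, CE_symm ⟨r, c, hc, rfl, e2⟩, (whisker_adj_inl_inl.mp h1).symm⟩

theorem adj_inr_inl_encode {a g d : V} (hce : CE H M a g) (hgd : H.Adj g d)
    (ha : Sum.inr a ∉ mSupp M) (hd : Sum.inl d ∉ mSupp M) :
    (evenConnGraph (whisker H) M).Adj (Sum.inr a) (Sum.inl d) := by
  obtain ⟨r, c, hc, h0, h1⟩ := hce
  refine ⟨by simp, ha, hd, Or.inr (Or.inl (ec_encode hM hc ?_ ?_))⟩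
  · rw [h0]; exact whisker_adj_from_inr.mpr rfl
  · rw [h1]; exact whisker_adj_inl_inl.mpr hgd

omit hM in
theorem adj_pair {a : V} (ha : Sum.inl a ∉ mSupp M) (ha' : Sum.inr a ∉ mSupp M) :
    (evenConnGraph (whisker H) M).Adj (Sum.inl a) (Sum.inr a) :=
  ⟨by simp, ha, ha', Or.inl (whisker_adj_to_inr.mpr rfl)⟩

end AdjCor

section Forest
open Sum SimpleGraph

variable {V : Type*} [Fintype V] [DecidableEq V] {H : SimpleGraph V}
  {M : Finset (Sym2 (V ⊕ V))}

/-- The subgraph of `H` induced on vertices matched by `M`. -/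
def Fg (H : SimpleGraph V) (M : Finset (Sym2 (V ⊕ V))) : SimpleGraph V where
  Adj x y := H.Adj x y ∧ Sum.inl x ∈ mSupp M ∧ Sum.inl y ∈ mSupp M
  symm := ⟨fun x y ⟨h, hx, hy⟩ => ⟨h.symm, hy, hx⟩⟩
  loopless := ⟨fun x ⟨h, _, _⟩ => H.loopless.irrefl x h⟩

omit [DecidableEq V] in
theorem altChain_supp {r : ℕ} {c : ℕ → V} (hc : AltChain H M r c) {i : ℕ}
    (hi : i < 2 * r) : Sum.inl (c i) ∈ mSupp M :=
  mem_mSupp_of (hc.2.1 (i / 2) (by omega)) (altChain_mem_edge hc hi)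

omit [DecidableEq V] in
theorem altChain_step (hM : IsMatchingOn (whisker H) Finset.univ M) {r : ℕ} {c : ℕ → V}
    (hc : AltChain H M r c) {i : ℕ} (hi : i + 1 < 2 * r) :
    (Fg H M).Adj (c i) (c (i + 1)) := by
  refine ⟨?_, altChain_supp hc (by omega), altChain_supp hc (by omega)⟩
  rcases Nat.even_or_odd i with ⟨k, hk⟩ | ⟨k, hk⟩
  · have h1 := hc.2.1 k (by omega)
    have := whisker_adj_inl_inl.mp ((SimpleGraph.mem_edgeSet _).mp (hM.1 _ h1))
    rw [show i = 2 * k by omega]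
    exact this
  · rw [show i = 2 * k + 1 by omega]
    exact hc.2.2.1 k (by omega)

omit [Fintype V] [DecidableEq V] in
theorem fgwalk_supp {x y : V} (p : (Fg H M).Walk x y) :
    ∀ z ∈ p.support, z = x ∨ Sum.inl z ∈ mSupp M := by
  induction p with
  | nil => intro z hz; left; simpa using hz
  | cons h q ih =>
    intro z hz
    rw [SimpleGraph.Walk.support_cons, List.mem_cons] at hz
    rcases hz with rfl | hz
    · exact Or.inl rfl
    · rcases ih z hz with rfl | hsup
      · exact Or.inr h.2.2
      · exact Or.inr hsup

theorem card_supp_le :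
    (@Finset.filter V (fun a => Sum.inl a ∈ mSupp M) (Classical.decPred _)
      Finset.univ).card ≤ 2 * M.card := by
  classical
  have hsub : (@Finset.filter V (fun a => Sum.inl a ∈ mSupp M) (Classical.decPred _)
      Finset.univ) ⊆ M.biUnion (fun e => Finset.univ.filter (fun a => Sum.inl a ∈ e)) := by
    intro a ha
    obtain ⟨e, he, hv⟩ := (Finset.mem_filter.mp ha).2
    exact Finset.mem_biUnion.mpr ⟨e, he, Finset.mem_filter.mpr ⟨Finset.mem_univ _, hv⟩⟩
  refine le_trans (Finset.card_le_card hsub) (le_trans (Finset.card_biUnion_le) ?_)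
  have hbound : ∀ e ∈ M,
      (Finset.univ.filter (fun a => (Sum.inl a : V ⊕ V) ∈ e)).card ≤ 2 := by
    intro e _
    induction e with
    | _ x y =>
      have hsub2 : (Finset.univ.filter (fun a => (Sum.inl a : V ⊕ V) ∈ s(x, y))) ⊆
          (Sum.elim (fun t => ({t} : Finset V)) (fun _ => ∅) x ∪
           Sum.elim (fun t => ({t} : Finset V)) (fun _ => ∅) y) := by
        intro a ha
        have := (Finset.mem_filter.mp ha).2
        rcases Sym2.mem_iff.mp this with h | h
        · apply Finset.mem_union_left; rw [← h]; simp
        · apply Finset.mem_union_right; rw [← h]; simp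
      refine le_trans (Finset.card_le_card hsub2) (le_trans (Finset.card_union_le _ _) ?_)
      have hc1 : ∀ z : V ⊕ V, (Sum.elim (fun t => ({t} : Finset V)) (fun _ => ∅) z).card ≤ 1 := by
        intro z; cases z <;> simp
      have := hc1 x; have := hc1 y; omega
  calc (∑ e ∈ M, (Finset.univ.filter (fun a => (Sum.inl a : V ⊕ V) ∈ e)).card)
      ≤ ∑ _e ∈ M, 2 := Finset.sum_le_sum hbound
    _ = 2 * M.card := by rw [Finset.sum_const, smul_eq_mul, mul_comm]

theorem fg_isAcyclic (hM : IsMatchingOn (whisker H) Finset.univ M)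
    (hrange : (∃ m : ℕ, (H.girth : ℕ∞) = (m : ℕ∞) ∧ 2 * M.card < m) ∨ H.IsAcyclic) :
    (Fg H M).IsAcyclic := by
  classical
  have hle : Fg H M ≤ H := fun _ _ h => h.1
  rcases hrange with ⟨m, hm, hqm⟩ | hac
  swap
  · intro v p hp
    exact hac (p.mapLe hle) (hp.mapLe hle)
  rw [SimpleGraph.isAcyclic_iff_forall_adj_isBridge]
  intro v w hvw
  rw [SimpleGraph.isBridge_iff]
  intro hreach
  rw [SimpleGraph.reachable_delete_edges_iff_exists_walk] at hreach
  obtain ⟨p0, hp0e⟩ := hreach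
  set p := p0.bypass with hpdef
  have hppath : p.IsPath := p0.bypass_isPath
  have hpe : s(v, w) ∉ p.edges := fun h => hp0e (p0.edges_bypass_subset h)
  have hrev : p.reverse.IsPath := hppath.reverse
  have hce : s(v, w) ∉ p.reverse.edges := by
    rw [SimpleGraph.Walk.edges_reverse, List.mem_reverse]
    exact hpe
  have hcyc : (SimpleGraph.Walk.cons hvw (p.reverse)).IsCycle :=
    SimpleGraph.Path.cons_isCycle ⟨p.reverse, hrev⟩ hvw hce
  set cyc := SimpleGraph.Walk.cons hvw p.reverse with hcycdef
  have hHcyc : (cyc.mapLe hle).IsCycle := hcyc.mapLe hle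
  -- girth bound from below
  have hnotac : ¬ H.IsAcyclic := fun h => h _ hHcyc
  have hegirth : H.egirth = (m : ℕ∞) := by
    have h1 : H.egirth ≠ ⊤ := fun h => hnotac (SimpleGraph.egirth_eq_top.mp h)
    have h2 := ENat.coe_toNat h1
    rw [← h2]
    exact_mod_cast hm
  have hgl : (m : ℕ∞) ≤ ((cyc.mapLe hle).length : ℕ∞) := by
    rw [← hegirth]
    exact iInf_le_of_le v (iInf_le_of_le (cyc.mapLe hle) (iInf_le _ hHcyc))
  have hmlen : m ≤ cyc.length := by
    have := Nat.cast_le.mp hgl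
    rwa [SimpleGraph.Walk.length_map] at this
  -- length bound from above
  have hsupp : ∀ z ∈ p.support, Sum.inl z ∈ mSupp M := by
    intro z hz
    rcases fgwalk_supp p z hz with rfl | h
    · exact hvw.2.1
    · exact h
  have hsub : p.support.toFinset ⊆
      (@Finset.filter V (fun a => Sum.inl a ∈ mSupp M) (Classical.decPred _)
        Finset.univ) := by
    intro z hz
    rw [Finset.mem_filter]
    exact ⟨Finset.mem_univ _, hsupp z (List.mem_toFinset.mp hz)⟩
  have hnodup : p.support.Nodup := (SimpleGraph.Walk.isPath_def _).mp hppath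
  have hlen1 : p.support.toFinset.card = p.length + 1 := by
    rw [List.toFinset_card_of_nodup hnodup, SimpleGraph.Walk.length_support]
  have hcyclen : cyc.length = p.length + 1 := by
    rw [hcycdef, SimpleGraph.Walk.length_cons, SimpleGraph.Walk.length_reverse]
  have := Finset.card_le_card hsub
  have := card_supp_le (V := V) (M := M)
  omega

end Forest

section Glue
open Sum SimpleGraph

theorem reach_of_fn {W : Type*} (G' : SimpleGraph W) (p : ℕ → W) :
    ∀ b a, a ≤ b → (∀ k, a ≤ k → k < b → G'.Adj (p k) (p (k + 1))) →
      G'.Reachable (p a) (p b) := by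
  intro b
  induction b with
  | zero =>
    intro a ha _
    obtain rfl := Nat.le_zero.mp ha
    exact Reachable.refl _
  | succ n ih =>
    intro a ha h
    rcases Nat.eq_or_lt_of_le ha with rfl | hlt
    · exact Reachable.refl _
    · have h1 := ih a (by omega) (fun k hk1 hk2 => h k hk1 (by omega))
      exact h1.trans (h n (by omega) (by omega)).reachable

variable {V : Type*} [Fintype V] [DecidableEq V] {H : SimpleGraph V}
  {M : Finset (Sym2 (V ⊕ V))}
variable (hM : IsMatchingOn (whisker H) Finset.univ M)
include hM

theorem chain_cross (hF : (Fg H M).IsAcyclic) {r₁ r₂ : ℕ} {c₁ c₂ : ℕ → V}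
    (h1 : AltChain H M r₁ c₁) (h2 : AltChain H M r₂ c₂)
    (hj0 : c₂ 0 = c₁ 1) (hj1 : c₂ 1 = c₁ 0) {i j : ℕ}
    (hi : i < r₁) (hj : j < r₂) (hi1 : 1 ≤ i) (hj1' : 1 ≤ j) :
    s((Sum.inl (c₁ (2 * i)) : V ⊕ V), Sum.inl (c₁ (2 * i + 1))) ≠
      s((Sum.inl (c₂ (2 * j)) : V ⊕ V), Sum.inl (c₂ (2 * j + 1))) := by
  intro heq
  have hr1 := h1.1
  have hr2 := h2.1
  obtain ⟨i', hi'range, hi'⟩ : ∃ i', (i' = 2 * i ∨ i' = 2 * i + 1) ∧ c₁ i' = c₂ (2 * j) := by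
    rcases Sym2.eq_iff.mp heq with ⟨ha, _⟩ | ⟨_, hb⟩
    · exact ⟨2 * i, Or.inl rfl, (Sum.inl_injective ha).symm ▸ rfl⟩
    · exact ⟨2 * i + 1, Or.inr rfl, (Sum.inl_injective hb).symm ▸ rfl⟩
  have hadj01 : (Fg H M).Adj (c₁ 0) (c₁ 1) := altChain_step hM h1 (by omega)
  have hbr := (SimpleGraph.isAcyclic_iff_forall_adj_isBridge.mp hF) hadj01
  rw [SimpleGraph.isBridge_iff] at hbr
  apply hbr
  set G' := Fg H M \ SimpleGraph.fromEdgeSet {s(c₁ 0, c₁ 1)} with hG'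
  have step1 : ∀ k, 1 ≤ k → k + 1 < 2 * r₁ → G'.Adj (c₁ k) (c₁ (k + 1)) := by
    intro k hk1 hk2
    have ha := altChain_step hM h1 hk2
    rw [hG', SimpleGraph.sdiff_adj, SimpleGraph.fromEdgeSet_adj]
    refine ⟨ha, ?_⟩
    rintro ⟨hmem', -⟩
    rw [Set.mem_singleton_iff] at hmem'
    rcases Sym2.eq_iff.mp hmem' with ⟨ha1, _⟩ | ⟨_, hb1⟩
    · exact altChain_nodup hM h1 (by omega) (by omega) (by omega) ha1
    · exact altChain_nodup hM h1 (by omega) (by omega) (by omega) hb1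
  have step2 : ∀ k, 1 ≤ k → k + 1 < 2 * r₂ → G'.Adj (c₂ k) (c₂ (k + 1)) := by
    intro k hk1 hk2
    have ha := altChain_step hM h2 hk2
    rw [hG', SimpleGraph.sdiff_adj, SimpleGraph.fromEdgeSet_adj]
    refine ⟨ha, ?_⟩
    rintro ⟨hmem', -⟩
    rw [Set.mem_singleton_iff, ← hj1, ← hj0] at hmem'
    rcases Sym2.eq_iff.mp hmem' with ⟨ha1, hb1⟩ | ⟨ha1, _⟩
    · have hk1' : k = 1 := by
        by_contra hne
        exact altChain_nodup hM h2 (by omega) (by omega) (by omega) ha1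
      rw [hk1'] at hb1
      exact altChain_nodup hM h2 (by omega) (by omega) (by omega) hb1
    · exact altChain_nodup hM h2 (by omega) (by omega) (by omega) ha1
  have hreach1 : G'.Reachable (c₁ 1) (c₁ i') :=
    reach_of_fn G' c₁ i' 1 (by omega) (fun k hk1 hk2 => step1 k hk1 (by omega))
  have hreach2 : G'.Reachable (c₂ 1) (c₂ (2 * j)) :=
    reach_of_fn G' c₂ (2 * j) 1 (by omega) (fun k hk1 hk2 => step2 k hk1 (by omega))
  have hA : G'.Reachable (c₁ 0) (c₂ (2 * j)) := by rw [← hj1]; exact hreach2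
  have hB : G'.Reachable (c₁ 1) (c₂ (2 * j)) := by rw [← hi']; exact hreach1
  exact hA.trans hB.symm

theorem glue (hF : (Fg H M).IsAcyclic) {r₁ r₂ : ℕ} {c₁ c₂ : ℕ → V}
    (h1 : AltChain H M r₁ c₁) (h2 : AltChain H M r₂ c₂)
    (hj0 : c₂ 0 = c₁ 1) (hj1 : c₂ 1 = c₁ 0) :
    ∃ cg, AltChain H M (r₁ + r₂ - 1) cg ∧ cg 0 = c₁ (2 * r₁ - 1) ∧
      cg (2 * (r₁ + r₂ - 1) - 1) = c₂ (2 * r₂ - 1) := by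
  have hr1 := h1.1
  have hr2 := h2.1
  set r := r₁ + r₂ - 1 with hrdef
  set cc : ℕ → V :=
    fun i => if i < 2 * r₁ then c₁ (2 * r₁ - 1 - i) else c₂ (i - 2 * r₁ + 2) with hccdef
  have hlt : ∀ i, i < 2 * r₁ → cc i = c₁ (2 * r₁ - 1 - i) := fun i h => if_pos h
  have hge : ∀ i, 2 * r₁ ≤ i → cc i = c₂ (i - 2 * r₁ + 2) := fun i h => if_neg (by omega)
  have medge : ∀ k, k < r → s((Sum.inl (cc (2 * k)) : V ⊕ V), Sum.inl (cc (2 * k + 1))) ∈ M := by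
    intro k hk
    by_cases hkr : k < r₁
    · rw [hlt (2 * k) (by omega), hlt (2 * k + 1) (by omega),
        show 2 * r₁ - 1 - 2 * k = 2 * (r₁ - 1 - k) + 1 by omega,
        show 2 * r₁ - 1 - (2 * k + 1) = 2 * (r₁ - 1 - k) by omega, Sym2.eq_swap]
      exact h1.2.1 _ (by omega)
    · rw [hge (2 * k) (by omega), hge (2 * k + 1) (by omega),
        show 2 * k - 2 * r₁ + 2 = 2 * (k - r₁ + 1) by omega,
        show 2 * k + 1 - 2 * r₁ + 2 = 2 * (k - r₁ + 1) + 1 by omega]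
      exact h2.2.1 _ (by omega)
  have hadjc : ∀ k, k + 1 < r → H.Adj (cc (2 * k + 1)) (cc (2 * k + 2)) := by
    intro k hk
    by_cases hkr : k + 1 < r₁
    · rw [hlt (2 * k + 1) (by omega), hlt (2 * k + 2) (by omega),
        show 2 * r₁ - 1 - (2 * k + 1) = 2 * (r₁ - k - 2) + 2 by omega,
        show 2 * r₁ - 1 - (2 * k + 2) = 2 * (r₁ - k - 2) + 1 by omega]
      exact (h1.2.2.1 _ (by omega)).symm
    · by_cases hkr2 : k + 1 = r₁
      · rw [hlt (2 * k + 1) (by omega), hge (2 * k + 2) (by omega),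
          show 2 * r₁ - 1 - (2 * k + 1) = 0 by omega,
          show 2 * k + 2 - 2 * r₁ + 2 = 2 by omega, ← hj1]
        exact h2.2.2.1 0 (by omega)
      · rw [hge (2 * k + 1) (by omega), hge (2 * k + 2) (by omega),
          show 2 * k + 1 - 2 * r₁ + 2 = 2 * (k - r₁ + 1) + 1 by omega,
          show 2 * k + 2 - 2 * r₁ + 2 = 2 * (k - r₁ + 1) + 2 by omega]
        exact h2.2.2.1 _ (by omega)
  have hinj : ∀ k l, k < r → l < r →
      s((Sum.inl (cc (2 * k)) : V ⊕ V), Sum.inl (cc (2 * k + 1))) =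
        s((Sum.inl (cc (2 * l)) : V ⊕ V), Sum.inl (cc (2 * l + 1))) → k = l := by
    have key : ∀ k l, k < r → l < r → ¬ k < r₁ → l < r₁ →
        s((Sum.inl (cc (2 * k)) : V ⊕ V), Sum.inl (cc (2 * k + 1))) =
          s((Sum.inl (cc (2 * l)) : V ⊕ V), Sum.inl (cc (2 * l + 1))) → False := by
      intro k l hk hl hkr hlr he
      rw [hge (2 * k) (by omega), hge (2 * k + 1) (by omega),
        show 2 * k - 2 * r₁ + 2 = 2 * (k - r₁ + 1) by omega,
        show 2 * k + 1 - 2 * r₁ + 2 = 2 * (k - r₁ + 1) + 1 by omega,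
        hlt (2 * l) (by omega), hlt (2 * l + 1) (by omega),
        show 2 * r₁ - 1 - 2 * l = 2 * (r₁ - 1 - l) + 1 by omega,
        show 2 * r₁ - 1 - (2 * l + 1) = 2 * (r₁ - 1 - l) by omega] at he
      rw [show s((Sum.inl (c₁ (2 * (r₁ - 1 - l) + 1)) : V ⊕ V), Sum.inl (c₁ (2 * (r₁ - 1 - l)))) =
        s((Sum.inl (c₁ (2 * (r₁ - 1 - l))) : V ⊕ V), Sum.inl (c₁ (2 * (r₁ - 1 - l) + 1)))
        from Sym2.eq_swap] at he
      by_cases hll : 1 ≤ r₁ - 1 - l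
      · exact chain_cross hM hF h1 h2 hj0 hj1 (by omega) (by omega) hll (by omega) he.symm
      · have hl0 : r₁ - 1 - l = 0 := by omega
        rw [hl0, show 2 * 0 = 0 by omega, show 2 * 0 + 1 = 1 by omega, ← hj1, ← hj0] at he
        rw [show s((Sum.inl (c₂ 1) : V ⊕ V), Sum.inl (c₂ 0)) =
          s((Sum.inl (c₂ 0) : V ⊕ V), Sum.inl (c₂ 1)) from Sym2.eq_swap] at he
        have h0 : (0 : ℕ) = k - r₁ + 1 := by
          apply h2.2.2.2 0 (k - r₁ + 1) (by omega) (by omega)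
          rw [show 2 * 0 = 0 by omega, show 2 * 0 + 1 = 1 by omega]
          exact he.symm
        omega
    intro k l hk hl he
    by_cases hkr : k < r₁ <;> by_cases hlr : l < r₁
    · rw [hlt (2 * k) (by omega), hlt (2 * k + 1) (by omega),
        show 2 * r₁ - 1 - 2 * k = 2 * (r₁ - 1 - k) + 1 by omega,
        show 2 * r₁ - 1 - (2 * k + 1) = 2 * (r₁ - 1 - k) by omega,
        hlt (2 * l) (by omega), hlt (2 * l + 1) (by omega),
        show 2 * r₁ - 1 - 2 * l = 2 * (r₁ - 1 - l) + 1 by omega,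
        show 2 * r₁ - 1 - (2 * l + 1) = 2 * (r₁ - 1 - l) by omega] at he
      rw [show s((Sum.inl (c₁ (2 * (r₁ - 1 - k) + 1)) : V ⊕ V), Sum.inl (c₁ (2 * (r₁ - 1 - k)))) =
        s((Sum.inl (c₁ (2 * (r₁ - 1 - k))) : V ⊕ V), Sum.inl (c₁ (2 * (r₁ - 1 - k) + 1)))
        from Sym2.eq_swap,
        show s((Sum.inl (c₁ (2 * (r₁ - 1 - l) + 1)) : V ⊕ V), Sum.inl (c₁ (2 * (r₁ - 1 - l)))) =
        s((Sum.inl (c₁ (2 * (r₁ - 1 - l))) : V ⊕ V), Sum.inl (c₁ (2 * (r₁ - 1 - l) + 1)))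
        from Sym2.eq_swap] at he
      have := h1.2.2.2 _ _ (by omega) (by omega) he
      omega
    · exact absurd he.symm (fun he2 => key l k hl hk hlr hkr he2)
    · exact absurd he (fun he2 => key k l hk hl hkr hlr he2)
    · rw [hge (2 * k) (by omega), hge (2 * k + 1) (by omega),
        show 2 * k - 2 * r₁ + 2 = 2 * (k - r₁ + 1) by omega,
        show 2 * k + 1 - 2 * r₁ + 2 = 2 * (k - r₁ + 1) + 1 by omega,
        hge (2 * l) (by omega), hge (2 * l + 1) (by omega),
        show 2 * l - 2 * r₁ + 2 = 2 * (l - r₁ + 1) by omega,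
        show 2 * l + 1 - 2 * r₁ + 2 = 2 * (l - r₁ + 1) + 1 by omega] at he
      have := h2.2.2.2 _ _ (by omega) (by omega) he
      omega
  refine ⟨cc, ⟨by omega, medge, hadjc, hinj⟩, ?_, ?_⟩
  · rw [hlt 0 (by omega), Nat.sub_zero]
  · by_cases hr2' : r₂ = 1
    · rw [hlt (2 * r - 1) (by omega), show 2 * r₁ - 1 - (2 * r - 1) = 0 by omega, ← hj1,
        show 2 * r₂ - 1 = 1 by omega]
    · rw [hge (2 * r - 1) (by omega), show 2 * r - 1 - 2 * r₁ + 2 = 2 * r₂ - 1 by omega]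

end Glue

section Main
open Sum SimpleGraph

variable {V : Type*} [Fintype V] [DecidableEq V] {H : SimpleGraph V}
  {M : Finset (Sym2 (V ⊕ V))}

theorem main_step (hM : IsMatchingOn (whisker H) Finset.univ M)
    (hF : (Fg H M).IsAcyclic) :
    ∀ T : Finset (V ⊕ V),
      ((∀ z ∈ T, z ∉ mSupp M) ∧
       (∀ a : V, Sum.inl a ∈ T → Sum.inr a ∈ T) ∧
       (∀ a b : V, Sum.inr a ∈ T → s(Sum.inl a, Sum.inl b) ∈ M → Sum.inr b ∉ T →
         ∀ f, CE H M a f → Sum.inr f ∉ T)) →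
      (∃ x ∈ T, ∃ y ∈ T, (evenConnGraph (whisker H) M).Adj x y) →
      ∃ u, u ∈ T ∧ ∃ w, w ∈ T ∧ (evenConnGraph (whisker H) M).Adj u w ∧
        (∀ z ∈ T, (evenConnGraph (whisker H) M).Adj z w →
          z = u ∨ (evenConnGraph (whisker H) M).Adj z u) ∧
        ((∀ z ∈ T.erase u, z ∉ mSupp M) ∧
         (∀ a : V, Sum.inl a ∈ T.erase u → Sum.inr a ∈ T.erase u) ∧
         (∀ a b : V, Sum.inr a ∈ T.erase u → s(Sum.inl a, Sum.inl b) ∈ M →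
           Sum.inr b ∉ T.erase u → ∀ f, CE H M a f → Sum.inr f ∉ T.erase u)) ∧
        ((∀ z ∈ linkSet (evenConnGraph (whisker H) M) T u, z ∉ mSupp M) ∧
         (∀ a : V, Sum.inl a ∈ linkSet (evenConnGraph (whisker H) M) T u →
           Sum.inr a ∈ linkSet (evenConnGraph (whisker H) M) T u) ∧
         (∀ a b : V, Sum.inr a ∈ linkSet (evenConnGraph (whisker H) M) T u →
           s(Sum.inl a, Sum.inl b) ∈ M →
           Sum.inr b ∉ linkSet (evenConnGraph (whisker H) M) T u →
           ∀ f, CE H M a f → Sum.inr f ∉ linkSet (evenConnGraph (whisker H) M) T u)) := by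
  classical
  intro T hGood hE
  set Γ := evenConnGraph (whisker H) M with hΓ
  by_cases hinl : ∃ a : V, Sum.inl a ∈ T
  · -- CASE 1 : shed a free vertex x_a, dominated companion y_a
    obtain ⟨a, haT⟩ := hinl
    have hxa : Sum.inl a ∉ mSupp M := hGood.1 _ haT
    have hya : Sum.inr a ∈ T := hGood.2.1 a haT
    have hyaN : Sum.inr a ∉ mSupp M := hGood.1 _ hya
    refine ⟨Sum.inl a, haT, Sum.inr a, hya, adj_pair hxa hyaN, ?_, ⟨?_, ?_, ?_⟩, ⟨?_, ?_, ?_⟩⟩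
    · intro z hz hadj
      exact Or.inl (adj_pendant hM hxa hadj)
    · exact fun z hz => hGood.1 z (Finset.mem_of_mem_erase hz)
    · intro b hb
      exact Finset.mem_erase.mpr ⟨by simp, hGood.2.1 b (Finset.mem_of_mem_erase hb)⟩
    · intro b b' hb hbb' hb' f hcf hf
      have hb'T : Sum.inr b' ∉ T := fun h => hb' (Finset.mem_erase.mpr ⟨by simp, h⟩)
      exact hGood.2.2 b b' (Finset.mem_of_mem_erase hb) hbb' hb'T f hcf
        (Finset.mem_of_mem_erase hf)
    · exact fun z hz => hGood.1 z (mem_linkSet.mp hz).1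
    · intro b hb
      have hbT := mem_linkSet.mp hb
      refine mem_linkSet.mpr ⟨hGood.2.1 b hbT.1, ?_, by simp⟩
      intro hadj
      exact hbT.2.2 (adj_pendant hM (hGood.1 _ hbT.1) hadj).symm
    · intro b b' hb hbb' hb' f hcf hf
      have hbT := (mem_linkSet.mp hb).1
      have hfL := mem_linkSet.mp hf
      by_cases hb'T : Sum.inr b' ∈ T
      · have hadj' : Γ.Adj (Sum.inl a) (Sum.inr b') := by
          by_contra hno
          exact hb' (mem_linkSet.mpr ⟨hb'T, hno, by simp⟩)
        have hsup' : Sum.inl b' ∈ mSupp M := mem_mSupp_of hbb' (Sym2.mem_mk_right _ _)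
        obtain ⟨g, hg1, hg2⟩ := adj_inr_inl_decode hM hsup' hadj'.symm
        obtain ⟨rA, cA, hcA, hA0, hA1⟩ := hg1
        obtain ⟨rQ, cQ, hcQ, hQ0, hQ1⟩ := hcf
        have heA : s(Sum.inl (cA 0), Sum.inl (cA 1)) ∈ M := by
          have := hcA.2.1 0 hcA.1
          rwa [show 2 * 0 = 0 by omega, show 2 * 0 + 1 = 1 by omega] at this
        rw [hA0] at heA
        have hbb'swap : s(Sum.inl b', Sum.inl b) ∈ M := by rw [Sym2.eq_swap]; exact hbb'
        have hcA1 : cA 1 = b := mate_unique hM heA hbb'swap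
        have heQ : s(Sum.inl (cQ 0), Sum.inl (cQ 1)) ∈ M := by
          have := hcQ.2.1 0 hcQ.1
          rwa [show 2 * 0 = 0 by omega, show 2 * 0 + 1 = 1 by omega] at this
        rw [hQ0] at heQ
        have hcQ1 : cQ 1 = b' := mate_unique hM heQ hbb'
        obtain ⟨cg, hcg, hg0, hg1'⟩ := glue hM hF hcA hcQ (by rw [hQ0, hcA1]) (by rw [hcQ1, hA0])
        have hcfg : CE H M f g :=
          CE_symm ⟨rA + rQ - 1, cg, hcg, by rw [hg0, hA1], by rw [hg1', hQ1]⟩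
        have hadjf : Γ.Adj (Sum.inr f) (Sum.inl a) :=
          adj_inr_inl_encode hM hcfg hg2 (hGood.1 _ hfL.1) hxa
        exact hfL.2.1 hadjf.symm
      · exact hGood.2.2 b b' hbT hbb' hb'T f hcf hfL.1
  · -- CASE 2 : only whisker vertices remain
    push_neg at hinl
    obtain ⟨a0, ha0, b0, hb0, hadj0⟩ := hE
    obtain ⟨a, rfl⟩ : ∃ a, a0 = Sum.inr a := by
      cases a0 with
      | inl x => exact absurd ha0 (hinl x)
      | inr x => exact ⟨x, rfl⟩
    obtain ⟨b, rfl⟩ : ∃ b, b0 = Sum.inr b := by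
      cases b0 with
      | inl x => exact absurd hb0 (hinl x)
      | inr x => exact ⟨x, rfl⟩
    have hdec := adj_inr_inr_decode hM hadj0
    set P : ℕ → Prop := fun n => ∃ c, AltChain H M n c ∧ Sum.inr (c 0) ∈ T ∧
      Sum.inr (c (2 * n - 1)) ∈ T with hPdef
    have hPwit : ∃ n, P n := by
      obtain ⟨r, c, hc, h0, h1⟩ := hdec.2.2
      exact ⟨r, c, hc, by rw [h0]; exact ha0, by rw [h1]; exact hb0⟩
    obtain ⟨nw, hnw⟩ := hPwit
    have hbound : ∀ n, P n → n ≤ M.card := fun n ⟨c, hc, _, _⟩ => altChain_r_le hc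
    set r0 := Nat.findGreatest P M.card with hr0def
    have hP0 : P r0 := Nat.findGreatest_spec (hbound _ hnw) hnw
    have hPmax : ∀ n, P n → n ≤ r0 := fun n hn => Nat.le_findGreatest (hbound n hn) hn
    obtain ⟨c, hc, hc0T, hc1T⟩ := hP0
    have hr0 : 1 ≤ r0 := hc.1
    have hedge : s(Sum.inl (c (2 * r0 - 2)), Sum.inl (c (2 * r0 - 1))) ∈ M := by
      have := hc.2.1 (r0 - 1) (by omega)
      rwa [show 2 * (r0 - 1) + 1 = 2 * r0 - 1 by omega,
        show 2 * (r0 - 1) = 2 * r0 - 2 by omega] at this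
    have hCEzmax : CE H M (c 0) (c (2 * r0 - 1)) := ⟨r0, c, hc, rfl, rfl⟩
    -- maximality: chains from the mate of the end can only reach the end
    have hmax : ∀ f, CE H M (c (2 * r0 - 2)) f → Sum.inr f ∈ T → f = c (2 * r0 - 1) := by
      intro f hcf hfT
      obtain ⟨rq, cq, hcq, hq0, hq1⟩ := hcf
      have heq0 : s(Sum.inl (cq 0), Sum.inl (cq 1)) ∈ M := by
        have := hcq.2.1 0 hcq.1
        rwa [show 2 * 0 = 0 by omega, show 2 * 0 + 1 = 1 by omega] at this
      rw [hq0] at heq0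
      have hcq1 : cq 1 = c (2 * r0 - 1) := mate_unique hM heq0 hedge
      by_cases hrq : rq = 1
      · rw [← hq1, show 2 * rq - 1 = 1 by omega, hcq1]
      · exfalso
        have hrev := altChain_reverse hc
        obtain ⟨cg, hcg, hg0, hg1⟩ := glue hM hF hrev hcq
          (by rw [hq0]; show c (2 * r0 - 2) = c (2 * r0 - 1 - 1); congr 1)
          (by rw [hcq1]; show c (2 * r0 - 1) = c (2 * r0 - 1 - 0); congr 1)
        have hPbig : P (r0 + rq - 1) := by
          refine ⟨cg, hcg, ?_, ?_⟩
          · rw [hg0]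
            show Sum.inr (c (2 * r0 - 1 - (2 * r0 - 1))) ∈ T
            rw [show 2 * r0 - 1 - (2 * r0 - 1) = 0 by omega]
            exact hc0T
          · rw [hg1, hq1]
            exact hfT
        have := hPmax _ hPbig
        have := hcq.1
        omega
    refine ⟨Sum.inr (c (2 * r0 - 1)), hc1T, Sum.inr (c (2 * r0 - 2)), ?_, ?_, ?_,
      ⟨?_, ?_, ?_⟩, ⟨?_, ?_, ?_⟩⟩
    · -- the mate is present in T
      by_contra hno
      have hedgeswap : s(Sum.inl (c (2 * r0 - 1)), Sum.inl (c (2 * r0 - 2))) ∈ M := by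
        rw [Sym2.eq_swap]; exact hedge
      exact hGood.2.2 _ _ hc1T hedgeswap hno (c 0) (CE_symm hCEzmax) hc0T
    · -- adjacency
      exact adj_of_CE hM (CE_symm (CE_of_medge hedge)) (hGood.1 _ hc1T)
        (hGood.1 _ (by
          by_contra hno
          have hedgeswap : s(Sum.inl (c (2 * r0 - 1)), Sum.inl (c (2 * r0 - 2))) ∈ M := by
            rw [Sym2.eq_swap]; exact hedge
          exact hGood.2.2 _ _ hc1T hedgeswap hno (c 0) (CE_symm hCEzmax) hc0T))
    · -- domination
      intro y hyT hyadj
      left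
      obtain ⟨g, rfl⟩ : ∃ g, y = Sum.inr g := by
        cases y with
        | inl x => exact absurd hyT (hinl x)
        | inr x => exact ⟨x, rfl⟩
      have hdec2 := adj_inr_inr_decode hM hyadj
      have := hmax g (CE_symm hdec2.2.2) hyT
      rw [this]
    · exact fun z hz => hGood.1 z (Finset.mem_of_mem_erase hz)
    · intro b1 hb1
      exact absurd (Finset.mem_of_mem_erase hb1) (hinl b1)
    · intro b1 b1' hb1 hedge1 hb1' f hcf1 hfmem
      have hb1T := Finset.mem_of_mem_erase hb1
      have hfT := Finset.mem_of_mem_erase hfmem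
      by_cases hb1'T : Sum.inr b1' ∈ T
      · have hb1'max : b1' = c (2 * r0 - 1) := by
          by_contra hne
          exact hb1' (Finset.mem_erase.mpr ⟨fun h => hne (Sum.inr_injective h), hb1'T⟩)
        subst hb1'max
        have hb1bbar : b1 = c (2 * r0 - 2) := by
          have h1' : s(Sum.inl (c (2 * r0 - 1)), Sum.inl b1) ∈ M := by
            rw [Sym2.eq_swap]; exact hedge1
          have h2' : s(Sum.inl (c (2 * r0 - 1)), Sum.inl (c (2 * r0 - 2))) ∈ M := by
            rw [Sym2.eq_swap]; exact hedge
          exact mate_unique hM h1' h2'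
        subst hb1bbar
        have := hmax f hcf1 hfT
        exact (Finset.mem_erase.mp hfmem).1 (by rw [this])
      · exact hGood.2.2 b1 b1' hb1T hedge1 hb1'T f hcf1 hfT
    · exact fun z hz => hGood.1 z (mem_linkSet.mp hz).1
    · intro b1 hb1
      exact absurd (mem_linkSet.mp hb1).1 (hinl b1)
    · intro b1 b1' hb1 hedge1 hb1' f hcf1 hfmem
      have hb1T := (mem_linkSet.mp hb1).1
      have hfL := mem_linkSet.mp hfmem
      by_cases hb1'T : Sum.inr b1' ∈ T
      · by_cases hb1'max : (Sum.inr b1' : V ⊕ V) = Sum.inr (c (2 * r0 - 1))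
        · have hb1'eq : b1' = c (2 * r0 - 1) := Sum.inr_injective hb1'max
          subst hb1'eq
          have hb1bbar : b1 = c (2 * r0 - 2) := by
            have h1' : s(Sum.inl (c (2 * r0 - 1)), Sum.inl b1) ∈ M := by
              rw [Sym2.eq_swap]; exact hedge1
            have h2' : s(Sum.inl (c (2 * r0 - 1)), Sum.inl (c (2 * r0 - 2))) ∈ M := by
              rw [Sym2.eq_swap]; exact hedge
            exact mate_unique hM h1' h2'
          subst hb1bbar
          have := hmax f hcf1 hfL.1
          exact hfL.2.2 (by rw [this])
        · have hadj2 : Γ.Adj (Sum.inr (c (2 * r0 - 1))) (Sum.inr b1') := by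
            by_contra hno
            exact hb1' (mem_linkSet.mpr ⟨hb1'T, hno, hb1'max⟩)
          have hR := CE_symm (adj_inr_inr_decode hM hadj2).2.2
          obtain ⟨rR, cR, hcR, hR0, hR1⟩ := hR
          have heS : s(Sum.inl (cR 0), Sum.inl (cR 1)) ∈ M := by
            have := hcR.2.1 0 hcR.1
            rwa [show 2 * 0 = 0 by omega, show 2 * 0 + 1 = 1 by omega] at this
          rw [hR0] at heS
          have hedge1swap : s(Sum.inl b1', Sum.inl b1) ∈ M := by
            rw [Sym2.eq_swap]; exact hedge1
          have hcR1 : cR 1 = b1 := mate_unique hM heS hedge1swap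
          obtain ⟨rQ, cQ, hcQ, hQ0, hQ1⟩ := hcf1
          have heQ : s(Sum.inl (cQ 0), Sum.inl (cQ 1)) ∈ M := by
            have := hcQ.2.1 0 hcQ.1
            rwa [show 2 * 0 = 0 by omega, show 2 * 0 + 1 = 1 by omega] at this
          rw [hQ0] at heQ
          have hcQ1 : cQ 1 = b1' := mate_unique hM heQ hedge1
          obtain ⟨cg, hcg, hg0, hg1⟩ := glue hM hF hcR hcQ (by rw [hQ0, hcR1])
            (by rw [hcQ1, hR0])
          have hcbf : CE H M (c (2 * r0 - 1)) f :=
            ⟨rR + rQ - 1, cg, hcg, by rw [hg0, hR1], by rw [hg1, hQ1]⟩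
          have : Γ.Adj (Sum.inr (c (2 * r0 - 1))) (Sum.inr f) :=
            adj_of_CE hM hcbf (hGood.1 _ hc1T) (hGood.1 _ hfL.1)
          exact hfL.2.1 this
      · exact hGood.2.2 b1 b1' hb1T hedge1 hb1'T f hcf1 hfL.1

end Main

/-- for pairwise disjoint edges `e₁,…,e_q` of `G = W(H)` with
`q < girth(H)/2` (or `q ≤ ν(G)` when `H` is acyclic), the independence complex of
the even-connection graph `G^{e₁⋯e_q}` is vertex decomposable. -/
theorem independenceComplex_evenConnGraph_vertexDecomposable
    {V : Type*} [Fintype V] [DecidableEq V] (H : SimpleGraph V) (q ν : ℕ)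
    (hν₁ : ∃ M : Finset (Sym2 (V ⊕ V)),
      IsMatchingOn (whisker H) Finset.univ M ∧ M.card = ν)
    (hν₂ : ∀ M : Finset (Sym2 (V ⊕ V)),
      IsMatchingOn (whisker H) Finset.univ M → M.card ≤ ν)
    (M : Finset (Sym2 (V ⊕ V))) (hM : IsMatchingOn (whisker H) Finset.univ M)
    (hcard : M.card = q) (hq : 1 ≤ q)
    (hrange : (∃ m : ℕ, H.girth = (m : ℕ∞) ∧ 2 * q < m) ∨ (H.IsAcyclic ∧ q ≤ ν)) :
    VertexDecomposable (fun F : Finset (V ⊕ V) =>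
      (∀ v ∈ F, v ∉ mSupp M) ∧
      ∀ a ∈ F, ∀ b ∈ F, ¬ (evenConnGraph (whisker H) M).Adj a b) := by
  classical
  have hF : (Fg H M).IsAcyclic := by
    apply fg_isAcyclic hM
    rcases hrange with ⟨m, h1, h2⟩ | ⟨h1, -⟩
    · exact Or.inl ⟨m, h1, by rw [hcard]; exact h2⟩
    · exact Or.inr h1
  set T₀ : Finset (V ⊕ V) :=
    @Finset.filter _ (fun v => v ∉ mSupp M) (Classical.decPred _) Finset.univ with hT₀
  have hmemT₀ : ∀ z : V ⊕ V, z ∈ T₀ ↔ z ∉ mSupp M := by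
    intro z
    rw [hT₀]
    exact ⟨fun h => ((@Finset.mem_filter _ _ (Classical.decPred _) _ _).mp h).2,
      fun h => (@Finset.mem_filter _ _ (Classical.decPred _) _ _).mpr
        ⟨Finset.mem_univ _, h⟩⟩
  have hGood₀ : (∀ z ∈ T₀, z ∉ mSupp M) ∧
      (∀ a : V, Sum.inl a ∈ T₀ → Sum.inr a ∈ T₀) ∧
      (∀ a b : V, Sum.inr a ∈ T₀ → s(Sum.inl a, Sum.inl b) ∈ M → Sum.inr b ∉ T₀ →
        ∀ f, CE H M a f → Sum.inr f ∉ T₀) := by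
    refine ⟨fun z hz => (hmemT₀ z).mp hz, ?_, ?_⟩
    · intro a ha
      rw [hmemT₀] at ha ⊢
      intro hsup
      exact ha (inl_mem_of_inr_mem hM hsup)
    · intro a b ha hedge hb f hcf hfT₀
      exfalso
      have hsupb : Sum.inr b ∈ mSupp M := by
        by_contra h
        exact hb ((hmemT₀ _).mpr h)
      have hswap : s(Sum.inl b, Sum.inl a) ∈ M := by
        rw [Sym2.eq_swap]; exact hedge
      exact inr_not_supp_of_medge hM hswap hsupb
  have hVD := engine (evenConnGraph (whisker H) M)
    (fun T => (∀ z ∈ T, z ∉ mSupp M) ∧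
      (∀ a : V, Sum.inl a ∈ T → Sum.inr a ∈ T) ∧
      (∀ a b : V, Sum.inr a ∈ T → s(Sum.inl a, Sum.inl b) ∈ M → Sum.inr b ∉ T →
        ∀ f, CE H M a f → Sum.inr f ∉ T))
    (fun T hG hE => main_step hM hF T hG hE) T₀ hGood₀
  refine vd_congr hVD ?_
  intro F
  constructor
  · rintro ⟨hsub, hind⟩
    exact ⟨fun v hv => (hmemT₀ v).mp (hsub hv), hind⟩
  · rintro ⟨hsub, hind⟩
    exact ⟨fun v hv => (hmemT₀ v).mpr (hsub v hv), hind⟩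
end
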